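/- arXiv:2604.16002 — 6 statements merged into one kernel-verified Lean document; each statement's English description precedes it below -/
import Mathlib

section
/- Let λ ∈ ℂ with |λ| < 1 and let (aₙ) be a complex sequence. Define bₙ = Σ_{k=1}^n λ^{n−k} a_k. Then for every N ≥ 1, (Σ_{n=1}^N |aₙ|²)^{1/2} ≤ (1+|λ|)·(Σ_{n=1}^N |bₙ|²)^{1/2} + (|λ|/(1−|λ|))·max_{1≤n≤N} |aₙ|. -/
theorem stmt_3 (lam : ℂ) (hlam : ‖lam‖ < 1) (a b : ℕ → ℂ)
    (hb : ∀ n, b n = ∑ k ∈ Finset.Icc 1 n, lam ^ (n - k) * a k)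
    (N : ℕ) (hN : 1 ≤ N) :
    Real.sqrt (∑ n ∈ Finset.Icc 1 N, ‖a n‖ ^ 2)
      ≤ (1 + ‖lam‖) * Real.sqrt (∑ n ∈ Finset.Icc 1 N, ‖b n‖ ^ 2)
        + (‖lam‖ / (1 - ‖lam‖)) *
          ((Finset.Icc 1 N).sup' (Finset.nonempty_Icc.mpr hN) (fun n => ‖a n‖)) := by
  have hb0 : b 0 = 0 := by simp [hb]
  have hrec : ∀ n, b (n + 1) = a (n + 1) + lam * b n := by
    intro n
    rw [hb (n + 1), hb n, Finset.sum_Icc_succ_top (Nat.le_add_left 1 n),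
      Nat.sub_self, pow_zero, one_mul, Finset.mul_sum, add_comm]
    congr 1
    apply Finset.sum_congr rfl
    intro k hk
    have hk' : k ≤ n := (Finset.mem_Icc.mp hk).2
    rw [show n + 1 - k = (n - k) + 1 by omega, pow_succ]
    ring
  set u : EuclideanSpace ℂ (Fin N) := WithLp.toLp 2 (fun i => a (i + 1)) with hu
  set v : EuclideanSpace ℂ (Fin N) := WithLp.toLp 2 (fun i => b (i + 1)) with hv
  set w : EuclideanSpace ℂ (Fin N) := WithLp.toLp 2 (fun i => b i) with hwdef
  have huv : u = v - lam • w := by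
    ext i
    simp only [hu, hv, hwdef, PiLp.sub_apply, PiLp.smul_apply, smul_eq_mul]
    rw [hrec i]
    ring
  have hnu : ‖u‖ = Real.sqrt (∑ n ∈ Finset.Icc 1 N, ‖a n‖ ^ 2) := by
    rw [EuclideanSpace.norm_eq]
    congr 1
    rw [Fin.sum_univ_eq_sum_range (fun i => ‖a (i + 1)‖ ^ 2),
      show Finset.Icc 1 N = Finset.Ico 1 (N + 1) from (Finset.Ico_add_one_right_eq_Icc 1 N).symm,
      Finset.sum_Ico_eq_sum_range]
    simp [add_comm]
  have hnv : ‖v‖ = Real.sqrt (∑ n ∈ Finset.Icc 1 N, ‖b n‖ ^ 2) := by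
    rw [EuclideanSpace.norm_eq]
    congr 1
    rw [Fin.sum_univ_eq_sum_range (fun i => ‖b (i + 1)‖ ^ 2),
      show Finset.Icc 1 N = Finset.Ico 1 (N + 1) from (Finset.Ico_add_one_right_eq_Icc 1 N).symm,
      Finset.sum_Ico_eq_sum_range]
    simp [add_comm]
  have hwv : ‖w‖ ≤ ‖v‖ := by
    rw [EuclideanSpace.norm_eq, EuclideanSpace.norm_eq]
    apply Real.sqrt_le_sqrt
    rw [Fin.sum_univ_eq_sum_range (fun i => ‖b i‖ ^ 2),
      Fin.sum_univ_eq_sum_range (fun i => ‖b (i + 1)‖ ^ 2)]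
    obtain ⟨M, rfl⟩ : ∃ M, N = M + 1 := ⟨N - 1, by omega⟩
    rw [Finset.sum_range_succ' (fun i => ‖b i‖ ^ 2) M,
      Finset.sum_range_succ (fun i => ‖b (i + 1)‖ ^ 2) M, hb0]
    simp [add_comm]
  have hmain : ‖u‖ ≤ (1 + ‖lam‖) * ‖v‖ := by
    calc ‖u‖ = ‖v - lam • w‖ := by rw [huv]
      _ ≤ ‖v‖ + ‖lam • w‖ := norm_sub_le _ _
      _ = ‖v‖ + ‖lam‖ * ‖w‖ := by rw [norm_smul]
      _ ≤ ‖v‖ + ‖lam‖ * ‖v‖ := by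
          gcongr
      _ = (1 + ‖lam‖) * ‖v‖ := by ring
  have hsup : (0:ℝ) ≤ (Finset.Icc 1 N).sup' (Finset.nonempty_Icc.mpr hN)
      (fun n => ‖a n‖) :=
    le_trans (norm_nonneg (a 1))
      (Finset.le_sup' (fun n => ‖a n‖) (Finset.mem_Icc.mpr ⟨le_refl 1, hN⟩))
  have hc : (0:ℝ) ≤ ‖lam‖ / (1 - ‖lam‖) := by
    apply div_nonneg (norm_nonneg _)
    linarith
  have := mul_nonneg hc hsup
  rw [← hnu, ← hnv]
  linarith
end

section
/- Let λ ∈ ℂ with |λ| < 1 and let (aₙ) be a complex sequence with Σ_{n=1}^∞ |aₙ|² = ∞ and max_{1≤n≤N} |aₙ|² / Σ_{n=1}^N |aₙ|² → 0 as N → ∞. Define bₙ = Σ_{k=1}^n λ^{n−k} a_k. Then max_{1≤n≤N} |bₙ|² / Σ_{n=1}^N |bₙ|² → 0 as N → ∞. -/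
open Filter

private lemma sum_Icc_one_eq_range (f : ℕ → ℝ) (N : ℕ) :
    ∑ n ∈ Finset.Icc 1 (N + 1), f n = ∑ i ∈ Finset.range (N + 1), f (i + 1) := by
  induction N with
  | zero => simp
  | succ N ih =>
    rw [Finset.sum_Icc_succ_top (Nat.le_add_left 1 (N + 1)) f, ih]
    exact (Finset.sum_range_succ (fun i => f (i + 1)) (N + 1)).symm

theorem stmt_4 (lam : ℂ) (hlam : ‖lam‖ < 1) (a b : ℕ → ℂ)
    (hb : ∀ n, b n = ∑ k ∈ Finset.Icc 1 n, lam ^ (n - k) * a k)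
    (ha : ¬ Summable (fun n => ‖a (n + 1)‖ ^ 2))
    (haLind : Tendsto (fun N : ℕ =>
        ((Finset.Icc 1 (N + 1)).sup' (Finset.nonempty_Icc.mpr (Nat.le_add_left 1 N))
            (fun n => ‖a n‖ ^ 2))
          / ∑ n ∈ Finset.Icc 1 (N + 1), ‖a n‖ ^ 2) atTop (nhds 0)) :
    Tendsto (fun N : ℕ =>
        ((Finset.Icc 1 (N + 1)).sup' (Finset.nonempty_Icc.mpr (Nat.le_add_left 1 N))
            (fun n => ‖b n‖ ^ 2))
          / ∑ n ∈ Finset.Icc 1 (N + 1), ‖b n‖ ^ 2) atTop (nhds 0) := by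
  set r := ‖lam‖ with hrdef
  have hr0 : (0:ℝ) ≤ r := norm_nonneg _
  have hr1 : (0:ℝ) < 1 - r := by linarith
  set C1 : ℝ := 2 + 2 * r ^ 2 with hC1def
  have hC1 : (0:ℝ) < C1 := by positivity
  set MA : ℕ → ℝ := fun N => (Finset.Icc 1 (N + 1)).sup'
      (Finset.nonempty_Icc.mpr (Nat.le_add_left 1 N)) (fun n => ‖a n‖ ^ 2) with hMAdef
  set MB : ℕ → ℝ := fun N => (Finset.Icc 1 (N + 1)).sup'
      (Finset.nonempty_Icc.mpr (Nat.le_add_left 1 N)) (fun n => ‖b n‖ ^ 2) with hMBdef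
  set SA : ℕ → ℝ := fun N => ∑ n ∈ Finset.Icc 1 (N + 1), ‖a n‖ ^ 2 with hSAdef
  set SB : ℕ → ℝ := fun N => ∑ n ∈ Finset.Icc 1 (N + 1), ‖b n‖ ^ 2 with hSBdef
  have hb0 : b 0 = 0 := by simp [hb]
  -- recurrence
  have hrec : ∀ n, b (n + 1) = a (n + 1) + lam * b n := by
    intro n
    rw [hb (n + 1), hb n, Finset.sum_Icc_succ_top (Nat.le_add_left 1 n), Finset.mul_sum]
    have hc : ∀ k ∈ Finset.Icc 1 n, lam ^ (n + 1 - k) * a k = lam * (lam ^ (n - k) * a k) := by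
      intro k hk
      obtain ⟨hk1, hk2⟩ := Finset.mem_Icc.mp hk
      rw [Nat.succ_sub hk2, pow_succ]
      ring
    rw [Finset.sum_congr rfl hc, Nat.sub_self, pow_zero, one_mul, add_comm]
  -- nonnegativity
  have hSAnn : ∀ N, (0:ℝ) ≤ SA N := fun N =>
    Finset.sum_nonneg fun n _ => by positivity
  have hSBnn : ∀ N, (0:ℝ) ≤ SB N := fun N =>
    Finset.sum_nonneg fun n _ => by positivity
  have hone : ∀ N : ℕ, (1:ℕ) ∈ Finset.Icc 1 (N + 1) := fun N =>
    Finset.mem_Icc.mpr ⟨le_refl 1, Nat.le_add_left 1 N⟩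
  have hMAnn : ∀ N, (0:ℝ) ≤ MA N := fun N =>
    le_trans (by positivity) (Finset.le_sup' (fun n => ‖a n‖ ^ 2) (hone N))
  have hMBnn : ∀ N, (0:ℝ) ≤ MB N := fun N =>
    le_trans (by positivity) (Finset.le_sup' (fun n => ‖b n‖ ^ 2) (hone N))
  -- sum comparison : SA N ≤ C1 * SB N
  have hsum : ∀ N, SA N ≤ C1 * SB N := by
    intro N
    have hpt : ∀ i, ‖a (i + 1)‖ ^ 2 ≤ 2 * ‖b (i + 1)‖ ^ 2 + 2 * r ^ 2 * ‖b i‖ ^ 2 := by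
      intro i
      have h1 : a (i + 1) = b (i + 1) - lam * b i := by rw [hrec i]; ring
      have h2 : ‖a (i + 1)‖ ≤ ‖b (i + 1)‖ + r * ‖b i‖ := by
        rw [h1]
        calc ‖b (i + 1) - lam * b i‖ ≤ ‖b (i + 1)‖ + ‖lam * b i‖ := norm_sub_le _ _
        _ = ‖b (i + 1)‖ + r * ‖b i‖ := by rw [norm_mul]
      nlinarith [norm_nonneg (a (i + 1)), norm_nonneg (b (i + 1)), norm_nonneg (b i),
        sq_nonneg (‖b (i + 1)‖ - r * ‖b i‖)]
    have hA : SA N = ∑ i ∈ Finset.range (N + 1), ‖a (i + 1)‖ ^ 2 :=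
      sum_Icc_one_eq_range _ N
    have hB : SB N = ∑ i ∈ Finset.range (N + 1), ‖b (i + 1)‖ ^ 2 :=
      sum_Icc_one_eq_range _ N
    have hshift : ∑ i ∈ Finset.range (N + 1), ‖b i‖ ^ 2 ≤ SB N := by
      rw [Finset.sum_range_succ' (fun i => ‖b i‖ ^ 2) N, hb0, hB]
      simp only [norm_zero]
      have : ∑ i ∈ Finset.range N, ‖b (i + 1)‖ ^ 2 ≤
          ∑ i ∈ Finset.range (N + 1), ‖b (i + 1)‖ ^ 2 :=
        Finset.sum_le_sum_of_subset_of_nonneg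
          (Finset.range_subset_range.mpr (Nat.le_succ N)) (fun i _ _ => by positivity)
      nlinarith
    calc SA N ≤ ∑ i ∈ Finset.range (N + 1),
        (2 * ‖b (i + 1)‖ ^ 2 + 2 * r ^ 2 * ‖b i‖ ^ 2) := by
          rw [hA]; exact Finset.sum_le_sum fun i _ => hpt i
    _ = 2 * (∑ i ∈ Finset.range (N + 1), ‖b (i + 1)‖ ^ 2)
        + 2 * r ^ 2 * ∑ i ∈ Finset.range (N + 1), ‖b i‖ ^ 2 := by
          rw [Finset.sum_add_distrib, ← Finset.mul_sum, ← Finset.mul_sum]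
    _ ≤ 2 * SB N + 2 * r ^ 2 * SB N := by
          have h2 : (2:ℝ) * r ^ 2 ≥ 0 := by positivity
          have := mul_le_mul_of_nonneg_left hshift h2
          rw [← hB]
          nlinarith
    _ = C1 * SB N := by rw [hC1def]; ring
  -- sup comparison : MB N ≤ MA N / (1-r)^2
  have hmax : ∀ N, MB N ≤ MA N / (1 - r) ^ 2 := by
    intro N
    apply Finset.sup'_le
    intro n hn
    obtain ⟨hn1, hn2⟩ := Finset.mem_Icc.mp hn
    set A := Real.sqrt (MA N) with hAdef
    have hAnn : (0:ℝ) ≤ A := Real.sqrt_nonneg _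
    have hak : ∀ k ∈ Finset.Icc 1 n, ‖a k‖ ≤ A := by
      intro k hk
      obtain ⟨hk1, hk2⟩ := Finset.mem_Icc.mp hk
      have hk' : k ∈ Finset.Icc 1 (N + 1) := Finset.mem_Icc.mpr ⟨hk1, le_trans hk2 hn2⟩
      have h1 : ‖a k‖ ^ 2 ≤ MA N := Finset.le_sup' (fun m => ‖a m‖ ^ 2) hk'
      have := Real.sqrt_le_sqrt h1
      rwa [Real.sqrt_sq (norm_nonneg _)] at this
    have hbn : ‖b n‖ ≤ A * (1 - r)⁻¹ := by
      calc ‖b n‖ ≤ ∑ k ∈ Finset.Icc 1 n, ‖lam ^ (n - k) * a k‖ := by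
            rw [hb n]; exact norm_sum_le _ _
      _ = ∑ k ∈ Finset.Icc 1 n, r ^ (n - k) * ‖a k‖ := by
            refine Finset.sum_congr rfl fun k _ => ?_
            rw [norm_mul, norm_pow]
      _ ≤ ∑ k ∈ Finset.Icc 1 n, r ^ (n - k) * A := by
            refine Finset.sum_le_sum fun k hk => ?_
            exact mul_le_mul_of_nonneg_left (hak k hk) (by positivity)
      _ = (∑ k ∈ Finset.Icc 1 n, r ^ (n - k)) * A := by rw [Finset.sum_mul]
      _ ≤ (1 - r)⁻¹ * A := by
            refine mul_le_mul_of_nonneg_right ?_ hAnn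
            have hle : ∑ k ∈ Finset.Icc 1 n, r ^ (n - k) ≤ ∑' j : ℕ, r ^ j := by
              have hinj : ∀ x ∈ Finset.Icc 1 n, ∀ y ∈ Finset.Icc 1 n,
                  n - x = n - y → x = y := by
                intro x hx y hy hxy
                obtain ⟨_, hx2⟩ := Finset.mem_Icc.mp hx
                obtain ⟨_, hy2⟩ := Finset.mem_Icc.mp hy
                omega
              calc ∑ k ∈ Finset.Icc 1 n, r ^ (n - k)
                  = ∑ j ∈ (Finset.Icc 1 n).image (fun k => n - k), r ^ j := by
                    rw [Finset.sum_image hinj]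
              _ ≤ ∑' j : ℕ, r ^ j := Summable.sum_le_tsum _ (fun i _ => by positivity)
                    (summable_geometric_of_lt_one hr0 hlam)
            rw [tsum_geometric_of_lt_one hr0 hlam] at hle
            exact hle
      _ = A * (1 - r)⁻¹ := mul_comm _ _
    calc ‖b n‖ ^ 2 ≤ (A * (1 - r)⁻¹) ^ 2 :=
          pow_le_pow_left₀ (norm_nonneg _) hbn 2
    _ = MA N / (1 - r) ^ 2 := by
          rw [mul_pow, Real.sq_sqrt (hMAnn N), div_eq_mul_inv, inv_pow]
  -- squeeze
  set C : ℝ := C1 / (1 - r) ^ 2 with hCdef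
  have hupper : Tendsto (fun N => C * (MA N / SA N)) atTop (nhds 0) := by
    have := haLind.const_mul C
    simpa using this
  refine tendsto_of_tendsto_of_tendsto_of_le_of_le tendsto_const_nhds hupper
    (fun N => div_nonneg (hMBnn N) (hSBnn N)) (fun N => ?_)
  show MB N / SB N ≤ C * (MA N / SA N)
  by_cases hSA : SA N = 0
  · -- all a's vanish, hence all b's vanish
    have hz : ∀ n ∈ Finset.Icc 1 (N + 1), ‖a n‖ ^ 2 = 0 := by
      have := (Finset.sum_eq_zero_iff_of_nonneg
        (fun n _ => by positivity : ∀ n ∈ Finset.Icc 1 (N + 1), (0:ℝ) ≤ ‖a n‖ ^ 2)).mp hSA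
      exact this
    have haz : ∀ n ∈ Finset.Icc 1 (N + 1), a n = 0 := by
      intro n hn
      have := hz n hn
      have : ‖a n‖ = 0 := by nlinarith [norm_nonneg (a n)]
      exact norm_eq_zero.mp this
    have hbz : ∀ n ∈ Finset.Icc 1 (N + 1), b n = 0 := by
      intro n hn
      obtain ⟨hn1, hn2⟩ := Finset.mem_Icc.mp hn
      rw [hb n]
      refine Finset.sum_eq_zero fun k hk => ?_
      obtain ⟨hk1, hk2⟩ := Finset.mem_Icc.mp hk
      rw [haz k (Finset.mem_Icc.mpr ⟨hk1, le_trans hk2 hn2⟩), mul_zero]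
    have hMB0 : MB N = 0 := by
      refine le_antisymm ?_ (hMBnn N)
      apply Finset.sup'_le
      intro n hn
      rw [hbz n hn]
      simp
    rw [hMB0, zero_div]
    exact mul_nonneg (div_nonneg hC1.le (by positivity))
      (div_nonneg (hMAnn N) (hSAnn N))
  · have hSApos : 0 < SA N := lt_of_le_of_ne (hSAnn N) (Ne.symm hSA)
    have hSBpos : 0 < SB N := by
      have := hsum N
      nlinarith
    have hSBge : SA N / C1 ≤ SB N := (div_le_iff₀ hC1).mpr (by nlinarith [hsum N])
    have h1 : MB N / SB N ≤ (MA N / (1 - r) ^ 2) / (SA N / C1) :=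
      div_le_div₀ (div_nonneg (hMAnn N) (by positivity)) (hmax N) (div_pos hSApos hC1) hSBge
    have h2 : (MA N / (1 - r) ^ 2) / (SA N / C1) = C * (MA N / SA N) := by
      rw [hCdef]
      field_simp
    rw [h2] at h1
    exact h1
end

section
/- Let Φ be the cumulative distribution function of the normal distribution N(0, 1/2), i.e., Φ(x) = (1/√π) ∫_{−∞}^x e^{−t²} dt. Then for all real p, q with 1/2 ≤ p ≤ 3/2 and −1 ≤ q ≤ 1, and all x ∈ ℝ: |Φ(px + q) − Φ(x)| ≤ 1.35·(|p − 1| + |q|). -/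
noncomputable def Phi (x : ℝ) : ℝ :=
  (1 / Real.sqrt Real.pi) * ∫ t in Set.Iic x, Real.exp (-t ^ 2)

lemma exp_neg_sq_integrable : MeasureTheory.Integrable (fun t : ℝ => Real.exp (-t ^ 2)) := by
  have := integrable_exp_neg_mul_sq (b := 1) one_pos
  simpa using this

lemma phi_diff_le (a b M : ℝ) (hab : a ≤ b)
    (hM : ∀ t ∈ Set.Icc a b, Real.exp (-t ^ 2) ≤ M) :
    |Phi b - Phi a| ≤ (1 / Real.sqrt Real.pi) * ((b - a) * M) := by
  have hint := exp_neg_sq_integrable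
  unfold Phi
  rw [← mul_sub, intervalIntegral.integral_Iic_sub_Iic hint.integrableOn hint.integrableOn,
    intervalIntegral.integral_of_le hab]
  have h1 : 0 ≤ ∫ t in Set.Ioc a b, Real.exp (-t ^ 2) :=
    MeasureTheory.setIntegral_nonneg measurableSet_Ioc (fun t _ => (Real.exp_pos _).le)
  have h2 : (∫ t in Set.Ioc a b, Real.exp (-t ^ 2)) ≤ (b - a) * M := by
    have hconst : MeasureTheory.IntegrableOn (fun _ : ℝ => M) (Set.Ioc a b) := by
      apply (MeasureTheory.integrableOn_const_iff (C := M)).mpr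
      exact Or.inr measure_Ioc_lt_top
    have := MeasureTheory.setIntegral_mono_on hint.integrableOn hconst measurableSet_Ioc
      (fun t ht => hM t ⟨ht.1.le, ht.2⟩)
    calc (∫ t in Set.Ioc a b, Real.exp (-t ^ 2)) ≤ ∫ _ in Set.Ioc a b, M := this
      _ = (b - a) * M := by
        rw [MeasureTheory.setIntegral_const, Real.volume_real_Ioc_of_le hab, smul_eq_mul]
  have hs : 0 < Real.sqrt Real.pi := Real.sqrt_pos.mpr Real.pi_pos
  rw [abs_mul, abs_of_pos (by positivity), abs_of_nonneg h1]
  exact mul_le_mul_of_nonneg_left h2 (by positivity)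

lemma phi_diff_abs_le (a b M : ℝ)
    (hM : ∀ t ∈ Set.Icc (min a b) (max a b), Real.exp (-t ^ 2) ≤ M) :
    |Phi b - Phi a| ≤ (1 / Real.sqrt Real.pi) * (|b - a| * M) := by
  rcases le_total a b with h | h
  · have := phi_diff_le a b M h (by simpa [min_eq_left h, max_eq_right h] using hM)
    rwa [abs_of_nonneg (by linarith : (0:ℝ) ≤ b - a)]
  · have := phi_diff_le b a M h (by simpa [min_eq_right h, max_eq_left h] using hM)
    rw [abs_sub_comm, abs_sub_comm b a]
    rwa [abs_of_nonneg (by linarith : (0:ℝ) ≤ a - b)]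

theorem stmt_7 (p q x : ℝ) (hp1 : 1 / 2 ≤ p) (hp2 : p ≤ 3 / 2)
    (hq1 : -1 ≤ q) (hq2 : q ≤ 1) :
    |Phi (p * x + q) - Phi x| ≤ 1.35 * (|p - 1| + |q|) := by
  have hs1 : 1 ≤ Real.sqrt Real.pi := by
    rw [show (1:ℝ) = Real.sqrt 1 by simp]
    exact Real.sqrt_le_sqrt (by linarith [Real.pi_gt_three])
  have hs : 0 < Real.sqrt Real.pi := by linarith
  -- Term A : |Phi (p*x+q) - Phi (p*x)| ≤ |q|
  have hA : |Phi (p * x + q) - Phi (p * x)| ≤ |q| := by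
    have h := phi_diff_abs_le (p * x) (p * x + q) 1
      (fun t _ => by
        rw [Real.exp_le_one_iff]
        nlinarith [sq_nonneg t])
    have : |p * x + q - p * x| = |q| := by ring_nf
    rw [this, mul_one] at h
    calc |Phi (p * x + q) - Phi (p * x)| ≤ (1 / Real.sqrt Real.pi) * |q| := h
      _ ≤ 1 * |q| := by
        apply mul_le_mul_of_nonneg_right _ (abs_nonneg q)
        rw [div_le_one hs]; exact hs1
      _ = |q| := one_mul _
  -- Term B : |Phi (p*x) - Phi x| ≤ |p - 1|
  have hB : |Phi (p * x) - Phi x| ≤ |p - 1| := by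
    have hM : ∀ t ∈ Set.Icc (min x (p * x)) (max x (p * x)),
        Real.exp (-t ^ 2) ≤ Real.exp (-(x ^ 2 / 4)) := by
      intro t ht
      rw [Real.exp_le_exp]
      rcases le_total 0 x with hx | hx
      · have h1 : x / 2 ≤ min x (p * x) := by
          rcases le_total x (p * x) with h | h
          · rw [min_eq_left h]; linarith
          · rw [min_eq_right h]; nlinarith
        have ht1 : x / 2 ≤ t := le_trans h1 ht.1
        nlinarith
      · have h1 : max x (p * x) ≤ x / 2 := by
          rcases le_total x (p * x) with h | h
          · rw [max_eq_right h]; nlinarith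
          · rw [max_eq_left h]; linarith
        have ht1 : t ≤ x / 2 := le_trans ht.2 h1
        nlinarith
    have h := phi_diff_abs_le x (p * x) (Real.exp (-(x ^ 2 / 4))) hM
    have hxabs : |p * x - x| = |p - 1| * |x| := by
      rw [← abs_mul]; ring_nf
    rw [hxabs] at h
    have hkey : |x| * Real.exp (-(x ^ 2 / 4)) ≤ 1 := by
      have h1 : Real.exp (-(x ^ 2 / 4)) ≤ 1 / (1 + x ^ 2 / 4) := by
        rw [Real.exp_neg, inv_eq_one_div]
        apply one_div_le_one_div_of_le (by positivity)
        linarith [Real.add_one_le_exp (x ^ 2 / 4)]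
      have h2 : |x| * (1 / (1 + x ^ 2 / 4)) ≤ 1 := by
        rw [mul_one_div, div_le_one (by positivity)]
        nlinarith [sq_nonneg (|x| - 2), sq_abs x]
      calc |x| * Real.exp (-(x ^ 2 / 4)) ≤ |x| * (1 / (1 + x ^ 2 / 4)) :=
            mul_le_mul_of_nonneg_left h1 (abs_nonneg x)
        _ ≤ 1 := h2
    calc |Phi (p * x) - Phi x|
        ≤ (1 / Real.sqrt Real.pi) * (|p - 1| * |x| * Real.exp (-(x ^ 2 / 4))) := h
      _ ≤ 1 * (|p - 1| * 1) := by
          apply mul_le_mul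
          · rw [div_le_one hs]; exact hs1
          · rw [mul_assoc]
            exact mul_le_mul_of_nonneg_left hkey (abs_nonneg _)
          · positivity
          · norm_num
      _ = |p - 1| := by ring
  calc |Phi (p * x + q) - Phi x|
      ≤ |Phi (p * x + q) - Phi (p * x)| + |Phi (p * x) - Phi x| := abs_sub_le _ _ _
    _ ≤ |q| + |p - 1| := add_le_add hA hB
    _ ≤ 1.35 * (|p - 1| + |q|) := by nlinarith [abs_nonneg q, abs_nonneg (p - 1)]
end

section
/- Let f : 𝔻 → 𝔻 be an inner function with f(0) = 0, inducing a Lebesgue-measure-preserving boundary map on 𝕋. Set λ = conj(f'(0)). Then for any integers n ≥ 1 and k ∈ ℤ, the inner product ⟨f^{∘n}, (f^{∘(n+1)})^k⟩ in L²(𝕋) equals λ if k = 1 and 0 otherwise. -/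
open MeasureTheory Filter

noncomputable def circleMeasure : Measure ℝ :=
  (ENNReal.ofReal (2 * Real.pi))⁻¹ • (volume.restrict (Set.Ioc 0 (2 * Real.pi)))

open Metric Complex

instance : IsFiniteMeasure circleMeasure := by
  constructor
  rw [circleMeasure, Measure.smul_apply, Measure.restrict_apply MeasurableSet.univ,
    Set.univ_inter, Real.volume_Ioc]
  have h2π : (0:ℝ) < 2 * Real.pi := by positivity
  rw [smul_eq_mul]
  exact ENNReal.mul_lt_top (ENNReal.inv_lt_top.2 (by simp [h2π, Real.pi_pos])) ENNReal.ofReal_lt_top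

lemma meanValue {u : ℂ → ℂ} (hu : DifferentiableOn ℂ u (Metric.ball 0 1))
    {r : ℝ} (hr0 : 0 < r) (hr1 : r < 1) :
    ∫ θ, u ((r : ℂ) * Complex.exp ((θ : ℂ) * Complex.I)) ∂circleMeasure = u 0 := by
  have h2π : (0:ℝ) < 2 * Real.pi := by positivity
  have hd : DifferentiableOn ℂ u (Metric.closedBall (0:ℂ) r) :=
    hu.mono (closedBall_subset_ball (by linarith))
  have key := hd.circleIntegral_sub_inv_smul (w := 0) (Metric.mem_ball_self hr0)
  have hne : ∀ θ : ℝ, circleMap 0 r θ ≠ 0 := fun θ => circleMap_ne_center hr0.ne'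
  have key2 : ∫ θ in (0:ℝ)..(2*Real.pi), u (circleMap 0 r θ) = (2 * Real.pi : ℂ) * u 0 := by
    have h1 : (∮ z in C(0, r), (z - 0)⁻¹ • u z)
        = ∫ θ in (0:ℝ)..(2*Real.pi), Complex.I * u (circleMap 0 r θ) := by
      rw [circleIntegral]
      congr 1 with θ
      rw [deriv_circleMap, smul_eq_mul, smul_eq_mul, sub_zero]
      field_simp [hne θ]
    rw [h1, intervalIntegral.integral_const_mul, smul_eq_mul] at key
    exact mul_left_cancel₀ Complex.I_ne_zero
      (key.trans (by ring))
  rw [circleMeasure, integral_smul_measure, ENNReal.toReal_inv,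
    ENNReal.toReal_ofReal h2π.le]
  have hIoc : ∫ θ in Set.Ioc (0:ℝ) (2*Real.pi), u ((r : ℂ) * Complex.exp ((θ : ℂ) * Complex.I))
      = ∫ θ in (0:ℝ)..(2*Real.pi), u (circleMap 0 r θ) := by
    rw [intervalIntegral.integral_of_le h2π.le]
    simp [circleMap]
  rw [hIoc, key2, real_smul]
  push_cast
  rw [← mul_assoc]
  rw [inv_mul_cancel₀ (by push_cast; norm_num [Real.pi_ne_zero] : (2*Real.pi:ℂ) ≠ 0), one_mul]

lemma boundary_integral {u : ℂ → ℂ} (hu : DifferentiableOn ℂ u (Metric.ball 0 1))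
    (hb : ∀ z ∈ Metric.ball (0:ℂ) 1, ‖u z‖ ≤ 1)
    {V : ℝ → ℂ}
    (hV : ∀ᵐ (θ : ℝ) ∂circleMeasure,
      Tendsto (fun r : ℝ => u ((r : ℂ) * Complex.exp ((θ : ℂ) * Complex.I)))
        (nhdsWithin 1 (Set.Iio 1)) (nhds (V θ))) :
    ∫ θ, V θ ∂circleMeasure = u 0 := by
  set rs : ℕ → ℝ := fun j => 1 - (1:ℝ)/(j+2) with hrs
  have hrs0 : ∀ j, 0 < rs j := by
    intro j
    have : (1:ℝ)/(j+2) ≤ 1/2 := by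
      apply div_le_div_of_nonneg_left one_pos.le two_pos
      push_cast; linarith [Nat.cast_nonneg (α := ℝ) j]
    simp only [hrs]; linarith
  have hrs1 : ∀ j, rs j < 1 := by
    intro j
    have : (0:ℝ) < 1/(j+2) := by positivity
    simp only [hrs]; linarith
  have hrt : Tendsto rs atTop (nhdsWithin 1 (Set.Iio 1)) := by
    apply tendsto_nhdsWithin_of_tendsto_nhds_of_eventually_within
    · have h1 : Tendsto (fun j : ℕ => ((j:ℝ)+2)) atTop atTop :=
        tendsto_atTop_add_const_right atTop 2 tendsto_natCast_atTop_atTop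
      have h0 : Tendsto (fun j : ℕ => (1:ℝ)/(j+2)) atTop (nhds 0) := by
        simpa [one_div, Pi.inv_def] using h1.inv_tendsto_atTop
      have h2 : Tendsto (fun j : ℕ => 1 - (1:ℝ)/(j+2)) atTop (nhds (1-0)) :=
        tendsto_const_nhds.sub h0
      rw [hrs]
      simpa using h2
    · exact Eventually.of_forall fun j => hrs1 j
  have hmem : ∀ j (θ : ℝ), ((rs j : ℝ) : ℂ) * Complex.exp ((θ:ℂ) * Complex.I) ∈ Metric.ball (0:ℂ) 1 := by
    intro j θ
    rw [mem_ball_zero_iff]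
    rw [norm_mul, Complex.norm_real, Real.norm_eq_abs,
      Complex.norm_exp_ofReal_mul_I, mul_one, abs_of_pos (hrs0 j)]
    exact hrs1 j
  have hFmeas : ∀ j, AEStronglyMeasurable
      (fun θ : ℝ => u (((rs j : ℝ) : ℂ) * Complex.exp ((θ:ℂ) * Complex.I))) circleMeasure := by
    intro j
    apply Continuous.aestronglyMeasurable
    apply hu.continuousOn.comp_continuous
    · exact (continuous_const.mul (Complex.continuous_exp.comp
        ((Complex.continuous_ofReal).mul continuous_const)))
    · exact fun θ => hmem j θ
  have hlim : ∀ᵐ (θ : ℝ) ∂circleMeasure,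
      Tendsto (fun j => u (((rs j : ℝ) : ℂ) * Complex.exp ((θ:ℂ) * Complex.I))) atTop (nhds (V θ)) := by
    filter_upwards [hV] with θ hθ
    exact hθ.comp hrt
  have hdct := tendsto_integral_of_dominated_convergence (bound := fun _ => (1:ℝ))
    hFmeas (integrable_const 1)
    (fun j => Eventually.of_forall fun θ => hb _ (hmem j θ)) hlim
  have heq : ∀ j, ∫ θ, u (((rs j : ℝ) : ℂ) * Complex.exp ((θ:ℂ) * Complex.I)) ∂circleMeasure = u 0 :=
    fun j => meanValue hu (hrs0 j) (hrs1 j)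
  rw [show (fun j => ∫ θ, u (((rs j : ℝ) : ℂ) * Complex.exp ((θ:ℂ) * Complex.I)) ∂circleMeasure)
      = fun _ => u 0 from funext heq] at hdct
  exact (tendsto_nhds_unique tendsto_const_nhds hdct).symm

theorem stmt_10 (f : ℂ → ℂ)
    (hf : DifferentiableOn ℂ f (Metric.ball 0 1))
    (hmaps : Set.MapsTo f (Metric.ball 0 1) (Metric.ball 0 1))
    (hf0 : f 0 = 0)
    (B : ℕ → ℝ → ℂ)
    (hBmeas : ∀ n, Measurable (B n))
    (hBlim : ∀ n, 1 ≤ n → ∀ᵐ (θ : ℝ) ∂circleMeasure,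
      Tendsto (fun r : ℝ => f^[n] ((r : ℂ) * Complex.exp ((θ : ℂ) * Complex.I)))
        (nhdsWithin 1 (Set.Iio 1)) (nhds (B n θ)))
    (hBinner : ∀ n, 1 ≤ n → ∀ᵐ (θ : ℝ) ∂circleMeasure, ‖B n θ‖ = 1)
    (lam : ℂ) (hlam : lam = starRingEnd ℂ (deriv f 0))
    (n : ℕ) (hn : 1 ≤ n) (k : ℤ) :
    ∫ θ, B n θ * starRingEnd ℂ ((B (n + 1) θ) ^ k) ∂circleMeasure
      = if k = 1 then lam else 0 := by
  -- iterates are differentiable on and map into the ball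
  have hiter : ∀ N : ℕ, DifferentiableOn ℂ f^[N] (Metric.ball 0 1) ∧
      Set.MapsTo f^[N] (Metric.ball 0 1) (Metric.ball 0 1) := by
    intro N
    induction N with
    | zero => exact ⟨by simpa using differentiableOn_id, by simpa using Set.mapsTo_id _⟩
    | succ N ih =>
      rw [Function.iterate_succ']
      exact ⟨hf.comp ih.1 ih.2, hmaps.comp ih.2⟩
  have hiter0 : ∀ N : ℕ, f^[N] (0:ℂ) = 0 := fun N => Function.iterate_fixed hf0 N
  have hiterle : ∀ N : ℕ, ∀ z ∈ Metric.ball (0:ℂ) 1, ‖f^[N] z‖ ≤ 1 := fun N z hz =>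
    (mem_ball_zero_iff.mp ((hiter N).2 hz)).le
  -- the Schwarz quotient ψ
  set ψ : ℂ → ℂ := dslope f 0 with hψ
  have hψd : DifferentiableOn ℂ ψ (Metric.ball 0 1) :=
    (Complex.differentiableOn_dslope (Metric.isOpen_ball.mem_nhds
      (Metric.mem_ball_self one_pos))).mpr hf
  have hψb : ∀ w ∈ Metric.ball (0:ℂ) 1, ‖ψ w‖ ≤ 1 := by
    intro w hw
    have := Complex.norm_dslope_le_div_of_mapsTo_ball hf (by rw [hf0]; exact hmaps.mono_right ball_subset_closedBall) hw
    simpa using this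
  have hψ0 : ψ 0 = deriv f 0 := dslope_same f 0
  have hkey : ∀ z, f z = z * ψ z := by
    intro z
    rcases eq_or_ne z 0 with rfl | hz
    · simp [hf0]
    · rw [hψ, dslope_of_ne f hz, slope_def_field, hf0, sub_zero, sub_zero,
        mul_div_cancel₀ _ hz]
  -- conj of unit vectors is the inverse
  have hconj : ∀ w : ℂ, ‖w‖ = 1 → (starRingEnd ℂ) w = w⁻¹ := by
    intro w hw
    refine (inv_eq_of_mul_eq_one_right ?_).symm
    rw [Complex.mul_conj]
    norm_cast
    rw [Complex.normSq_eq_norm_sq, hw, one_pow]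
  by_cases hk1 : 1 ≤ k
  · -- k ≥ 1
    set m : ℕ := (k - 1).toNat with hm
    have hmk : (m : ℤ) + 1 = k := by
      rw [hm]; omega
    set u : ℂ → ℂ := fun z => (f^[n] z)^m * (ψ (f^[n] z))^(m+1) with hu
    have hud : DifferentiableOn ℂ u (Metric.ball 0 1) :=
      ((hiter n).1.pow m).mul ((hψd.comp (hiter n).1 (hiter n).2).pow (m+1))
    have hub : ∀ z ∈ Metric.ball (0:ℂ) 1, ‖u z‖ ≤ 1 := by
      intro z hz
      rw [hu]
      simp only [norm_mul, norm_pow]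
      exact mul_le_one₀ (pow_le_one₀ (norm_nonneg _) (hiterle n z hz))
        (by positivity) (pow_le_one₀ (norm_nonneg _) (hψb _ ((hiter n).2 hz)))
    have hW : ∫ θ, (starRingEnd ℂ) (B n θ * (starRingEnd ℂ) ((B (n+1) θ) ^ k)) ∂circleMeasure
        = u 0 := by
      apply boundary_integral hud hub
      filter_upwards [hBlim n hn, hBlim (n+1) (by omega), hBinner n hn, hBinner (n+1) (by omega)]
        with θ h1 h2 hn1 hn2
      set c : ℝ → ℂ := fun r => (r : ℂ) * Complex.exp ((θ:ℂ) * Complex.I) with hc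
      have hw0 : B n θ ≠ 0 := by
        intro h; rw [h, norm_zero] at hn1; norm_num at hn1
      have hev : ∀ᶠ r in nhdsWithin 1 (Set.Iio 1), f^[n] (c r) ≠ 0 :=
        h1.eventually_ne hw0
      have hψt : Tendsto (fun r => ψ (f^[n] (c r))) (nhdsWithin 1 (Set.Iio 1))
          (nhds (B (n+1) θ / B n θ)) := by
        have hdiv : Tendsto (fun r => f^[n+1] (c r) / f^[n] (c r)) (nhdsWithin 1 (Set.Iio 1))
            (nhds (B (n+1) θ / B n θ)) := h2.div h1 hw0
        refine hdiv.congr' (hev.mono fun r hr => ?_)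
        rw [Function.iterate_succ_apply' f n (c r), hkey (f^[n] (c r)),
          mul_div_cancel_left₀ _ hr]
      have htot : Tendsto (fun r => u (c r)) (nhdsWithin 1 (Set.Iio 1))
          (nhds ((B n θ)^m * (B (n+1) θ / B n θ)^(m+1))) := (h1.pow m).mul (hψt.pow (m+1))
      have hval : (B n θ)^m * (B (n+1) θ / B n θ)^(m+1)
          = (starRingEnd ℂ) (B n θ * (starRingEnd ℂ) ((B (n+1) θ) ^ k)) := by
        rw [map_mul, Complex.conj_conj, hconj _ hn1, ← hmk,
          show ((m:ℤ)+1) = ((m+1:ℕ):ℤ) by push_cast; ring, zpow_natCast]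
        rw [div_pow, pow_succ (B n θ) m, mul_comm (B n θ ^ m) (B n θ), ← div_div, mul_div_assoc',
          mul_div_cancel_left₀ _ (pow_ne_zero m hw0), div_eq_inv_mul]
      rw [← hval]
      exact htot
    have hgoal : ∫ θ, B n θ * starRingEnd ℂ ((B (n + 1) θ) ^ k) ∂circleMeasure
        = (starRingEnd ℂ) (u 0) := by
      rw [← hW, ← integral_conj]
      congr 1 with θ
      rw [Complex.conj_conj]
    rw [hgoal, hu]
    simp only [hiter0 n, hψ0]
    rcases eq_or_ne k 1 with hk | hk
    · have hm0 : m = 0 := by omega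
      rw [if_pos hk, hm0, hlam]
      norm_num
    · have hm0 : m ≠ 0 := by omega
      rw [if_neg hk, zero_pow hm0]
      simp
  · -- k ≤ 0
    push_neg at hk1
    set m : ℕ := (-k).toNat with hm
    have hmk : -(m : ℤ) = k := by rw [hm]; omega
    set u : ℂ → ℂ := fun z => f^[n] z * (f^[n+1] z)^m with hu
    have hud : DifferentiableOn ℂ u (Metric.ball 0 1) :=
      (hiter n).1.mul ((hiter (n+1)).1.pow m)
    have hub : ∀ z ∈ Metric.ball (0:ℂ) 1, ‖u z‖ ≤ 1 := by
      intro z hz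
      rw [hu]
      simp only [norm_mul, norm_pow]
      exact mul_le_one₀ (hiterle n z hz) (by positivity)
        (pow_le_one₀ (norm_nonneg _) (hiterle (n+1) z hz))
    have hW : ∫ θ, B n θ * starRingEnd ℂ ((B (n + 1) θ) ^ k) ∂circleMeasure = u 0 := by
      apply boundary_integral hud hub
      filter_upwards [hBlim n hn, hBlim (n+1) (by omega), hBinner (n+1) (by omega)]
        with θ h1 h2 hn2
      have hval : B n θ * (starRingEnd ℂ) ((B (n + 1) θ) ^ k)
          = B n θ * (B (n+1) θ)^m := by
        rw [map_zpow₀, hconj _ hn2, ← hmk, zpow_neg, inv_zpow, inv_inv, zpow_natCast]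
      rw [hval]
      exact h1.mul (h2.pow m)
    rw [hW, hu]
    simp only [hiter0 n, zero_mul]
    rw [if_neg (by omega)]
end

section
/- Let f be an inner function with f(0) = 0, set λ = conj(f'(0)), and Yₙ = f^{∘n} − λ f^{∘(n+1)} on 𝕋. Let 𝓕_{n+1} be the completed σ-algebra generated by f^{∘(n+1)}. Then E[Yₙ | 𝓕_{n+1}] = 0, i.e., (Yₙ) is a reverse martingale difference sequence with respect to the decreasing filtration (𝓕ₙ). -/
open MeasureTheory Filter

instance circleMeasure_prob : IsProbabilityMeasure circleMeasure := by
  constructor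
  have h2pi : (0:ℝ) < 2 * Real.pi := by positivity
  simp only [circleMeasure, Measure.smul_apply, Measure.restrict_apply MeasurableSet.univ,
    Set.univ_inter, Real.volume_Ioc, smul_eq_mul, sub_zero]
  rw [ENNReal.inv_mul_cancel (by simp [h2pi, Real.pi_pos]) ENNReal.ofReal_ne_top]

lemma circle_mean {H : ℂ → ℂ} (hH : DifferentiableOn ℂ H (Metric.ball 0 1))
    {r : ℝ} (h0 : 0 < r) (h1 : r < 1) :
    ∫ θ, H ((r : ℂ) * Complex.exp ((θ : ℂ) * Complex.I)) ∂circleMeasure = H 0 := by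
  have h2pi : (0:ℝ) < 2 * Real.pi := by positivity
  have hdc : DiffContOnCl ℂ H (Metric.ball 0 r) := by
    refine ⟨hH.mono (Metric.ball_subset_ball h1.le), ?_⟩
    rw [closure_ball (0:ℂ) h0.ne']
    exact hH.continuousOn.mono (Metric.closedBall_subset_ball h1)
  have hc := hdc.circleIntegral_sub_inv_smul (Metric.mem_ball_self h0)
  rw [circleIntegral] at hc
  simp only [deriv_circleMap, sub_zero, smul_eq_mul] at hc
  have key : ∀ θ : ℝ, circleMap 0 r θ * Complex.I * ((circleMap 0 r θ)⁻¹ * H (circleMap 0 r θ))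
      = Complex.I * H (circleMap 0 r θ) := by
    intro θ
    have hne : circleMap 0 r θ ≠ 0 := by
      simpa using circleMap_ne_center (c := (0:ℂ)) h0.ne' (θ := θ)
    field_simp
  simp only [key] at hc
  rw [intervalIntegral.integral_const_mul] at hc
  have hI : (2 * (Real.pi:ℂ) * Complex.I) * H 0 = Complex.I * (2 * (Real.pi:ℂ) * H 0) := by ring
  rw [hI] at hc
  have hc2 : ∫ θ in (0:ℝ)..(2*Real.pi), H (circleMap 0 r θ) = 2 * (Real.pi:ℂ) * H 0 :=
    mul_left_cancel₀ Complex.I_ne_zero hc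
  have hmap : ∀ θ : ℝ, circleMap 0 r θ = (r:ℂ) * Complex.exp ((θ:ℂ) * Complex.I) := by
    intro θ; simp [circleMap]
  rw [intervalIntegral.integral_of_le h2pi.le] at hc2
  simp only [hmap] at hc2
  rw [circleMeasure, integral_smul_measure, hc2]
  have : (ENNReal.ofReal (2 * Real.pi))⁻¹.toReal = (2 * Real.pi)⁻¹ := by
    rw [ENNReal.toReal_inv, ENNReal.toReal_ofReal h2pi.le]
  rw [this]
  rw [Complex.real_smul]
  push_cast
  have hπ : (Real.pi:ℂ) ≠ 0 := by
    simpa using Complex.ofReal_ne_zero.mpr Real.pi_ne_zero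
  field_simp
lemma circle_boundary {H : ℂ → ℂ} {h : ℝ → ℂ}
    (hH : DifferentiableOn ℂ H (Metric.ball 0 1))
    (hb : ∀ z ∈ Metric.ball (0:ℂ) 1, ‖H z‖ ≤ 1)
    (hlim : ∀ᵐ (θ : ℝ) ∂circleMeasure, Tendsto
      (fun r : ℝ => H ((r:ℂ) * Complex.exp ((θ:ℂ) * Complex.I)))
      (nhdsWithin 1 (Set.Iio 1)) (nhds (h θ))) :
    ∫ θ, h θ ∂circleMeasure = H 0 := by
  set rs : ℕ → ℝ := fun k => 1 - ((k:ℝ) + 2)⁻¹ with hrs_def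
  have hpos : ∀ k : ℕ, (0:ℝ) < (k:ℝ) + 2 := fun k => by positivity
  have h0k : ∀ k, 0 < rs k := by
    intro k
    have : ((k:ℝ) + 2)⁻¹ ≤ (2:ℝ)⁻¹ := by
      apply inv_anti₀ (by norm_num)
      simp
    simp only [hrs_def]
    nlinarith
  have h1k : ∀ k, rs k < 1 := by
    intro k
    have : (0:ℝ) < ((k:ℝ) + 2)⁻¹ := by positivity
    simp only [hrs_def]; linarith
  have hrs : Tendsto rs atTop (nhdsWithin 1 (Set.Iio 1)) := by
    apply tendsto_nhdsWithin_of_tendsto_nhds_of_eventually_within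
    · have h2 : Tendsto (fun k : ℕ => ((k:ℝ) + 2)) atTop atTop :=
        tendsto_atTop_add_const_right _ 2 tendsto_natCast_atTop_atTop
      have h3 : Tendsto (fun k : ℕ => ((k:ℝ) + 2)⁻¹) atTop (nhds 0) :=
        h2.inv_tendsto_atTop
      have h4 := (tendsto_const_nhds : Tendsto (fun _ : ℕ => (1:ℝ)) atTop (nhds 1)).sub h3
      simpa using h4
    · exact Eventually.of_forall fun k => h1k k
  have hcont : ∀ k, Continuous fun θ : ℝ => H ((rs k : ℂ) * Complex.exp ((θ:ℂ) * Complex.I)) := by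
    intro k
    have hc1 : Continuous fun θ : ℝ => (rs k : ℂ) * Complex.exp ((θ:ℂ) * Complex.I) :=
      continuous_const.mul (Complex.continuous_exp.comp (Complex.continuous_ofReal.mul continuous_const))
    apply hH.continuousOn.comp_continuous hc1
    intro θ
    rw [Metric.mem_ball, dist_zero_right, norm_mul]
    simp only [Complex.norm_exp_ofReal_mul_I, mul_one, Complex.norm_real, Real.norm_eq_abs]
    rw [abs_of_pos (h0k k)]
    exact h1k k
  have hmem : ∀ (r : ℝ), 0 < r → r < 1 → ∀ θ : ℝ,
      (r : ℂ) * Complex.exp ((θ:ℂ) * Complex.I) ∈ Metric.ball (0:ℂ) 1 := by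
    intro r hr0 hr1 θ
    rw [Metric.mem_ball, dist_zero_right, norm_mul]
    simp only [Complex.norm_exp_ofReal_mul_I, mul_one, Complex.norm_real, Real.norm_eq_abs]
    rwa [abs_of_pos hr0]
  have key := tendsto_integral_of_dominated_convergence (μ := circleMeasure)
    (F := fun k θ => H ((rs k : ℂ) * Complex.exp ((θ:ℂ) * Complex.I)))
    (f := h) (bound := fun _ => 1)
    (fun k => (hcont k).aestronglyMeasurable)
    (integrable_const 1)
    (fun k => Eventually.of_forall fun θ => hb _ (hmem _ (h0k k) (h1k k) θ))
    (hlim.mono fun θ hθ => hθ.comp hrs)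
  have hconst : (fun k => ∫ θ, H ((rs k : ℂ) * Complex.exp ((θ:ℂ) * Complex.I)) ∂circleMeasure)
      = fun _ => H 0 := by
    funext k
    exact circle_mean hH (h0k k) (h1k k)
  rw [hconst] at key
  exact (tendsto_nhds_unique tendsto_const_nhds key).symm

lemma iter_props {f : ℂ → ℂ}
    (hf : DifferentiableOn ℂ f (Metric.ball 0 1))
    (hmaps : Set.MapsTo f (Metric.ball 0 1) (Metric.ball 0 1))
    (hf0 : f 0 = 0) (m : ℕ) :
    DifferentiableOn ℂ (f^[m]) (Metric.ball 0 1) ∧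
      Set.MapsTo (f^[m]) (Metric.ball 0 1) (Metric.ball 0 1) ∧ f^[m] 0 = 0 := by
  induction m with
  | zero => simpa using ⟨differentiableOn_id, Set.mapsTo_id _⟩
  | succ m ih =>
    obtain ⟨hd, hm, h0⟩ := ih
    refine ⟨?_, ?_, ?_⟩
    · rw [Function.iterate_succ']
      exact hf.comp hd hm
    · rw [Function.iterate_succ']
      exact hmaps.comp hm
    · rw [Function.iterate_succ_apply', h0, hf0]
theorem stmt_11 (f : ℂ → ℂ)
    (hf : DifferentiableOn ℂ f (Metric.ball 0 1))
    (hmaps : Set.MapsTo f (Metric.ball 0 1) (Metric.ball 0 1))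
    (hf0 : f 0 = 0)
    (B : ℕ → ℝ → ℂ)
    (hBmeas : ∀ n, Measurable (B n))
    (hBlim : ∀ n, 1 ≤ n → ∀ᵐ (θ : ℝ) ∂circleMeasure,
      Tendsto (fun r : ℝ => f^[n] ((r : ℂ) * Complex.exp ((θ : ℂ) * Complex.I)))
        (nhdsWithin 1 (Set.Iio 1)) (nhds (B n θ)))
    (hBinner : ∀ n, 1 ≤ n → ∀ᵐ (θ : ℝ) ∂circleMeasure, ‖B n θ‖ = 1)
    (lam : ℂ) (hlam : lam = starRingEnd ℂ (deriv f 0))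
    (n : ℕ) (hn : 1 ≤ n) :
    circleMeasure[(fun θ => B n θ - lam * B (n + 1) θ) |
        MeasurableSpace.comap (B (n + 1)) inferInstance]
      =ᵐ[circleMeasure] 0 := by
  classical
  set μ := circleMeasure with hμdef
  obtain ⟨hFd, hFm, hF0⟩ := iter_props hf hmaps hf0 n
  obtain ⟨hGd, hGm, hG0⟩ := iter_props hf hmaps hf0 (n+1)
  set D := Metric.ball (0:ℂ) 1 with hDdef
  set F : ℂ → ℂ := f^[n] with hFdef
  set G : ℂ → ℂ := f^[n+1] with hGdef
  -- the Schwarz quotient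
  set φ : ℂ → ℂ := dslope f 0 with hφdef
  have hφd : DifferentiableOn ℂ φ D :=
    (Complex.differentiableOn_dslope (Metric.isOpen_ball.mem_nhds (Metric.mem_ball_self one_pos))).mpr hf
  have hmaps' : Set.MapsTo f D (Metric.ball (f 0) 1) := by rwa [hf0]
  have hφb : ∀ z ∈ D, ‖φ z‖ ≤ 1 := by
    intro z hz
    simpa using Complex.norm_dslope_le_div_of_mapsTo_ball hf (hmaps'.mono_right Metric.ball_subset_closedBall) hz
  have hfactor : ∀ w : ℂ, f w = w * φ w := by
    intro w
    rcases eq_or_ne w 0 with rfl | hw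
    · simp [hf0]
    · rw [hφdef, dslope_of_ne _ hw, slope_def_field, hf0, sub_zero, sub_zero,
        mul_div_cancel₀ _ hw]
  set ψ : ℂ → ℂ := fun z => φ (F z) with hψdef
  have hψd : DifferentiableOn ℂ ψ D := hφd.comp hFd hFm
  have hψb : ∀ z ∈ D, ‖ψ z‖ ≤ 1 := fun z hz => hφb _ (hFm hz)
  have hGF : ∀ z, G z = F z * ψ z := by
    intro z
    rw [hGdef, hψdef]
    rw [show f^[n+1] z = f (F z) from Function.iterate_succ_apply' f n z]
    exact hfactor (F z)
  have hψ0 : ψ 0 = deriv f 0 := by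
    show φ (F 0) = deriv f 0
    rw [hF0, hφdef, dslope_same]
  -- boundary data
  have hlimF := hBlim n hn
  have hlimG := hBlim (n+1) (by omega)
  have hnormF := hBinner n hn
  have hnormG := hBinner (n+1) (by omega)
  have hballnorm : ∀ z ∈ D, ‖z‖ ≤ 1 := by
    intro z hz
    rw [hDdef, Metric.mem_ball, dist_zero_right] at hz
    exact hz.le
  -- Moment 1 : ∫ Bₙ · Bₙ₊₁^k = 0
  have M1 : ∀ k : ℕ, ∫ θ, B n θ * (B (n+1) θ)^k ∂μ = 0 := by
    intro k
    have hd : DifferentiableOn ℂ (fun z => F z * (G z)^k) D := hFd.mul (hGd.pow k)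
    have hbd : ∀ z ∈ D, ‖F z * (G z)^k‖ ≤ 1 := by
      intro z hz
      rw [norm_mul, norm_pow]
      have h1 : ‖F z‖ ≤ 1 := hballnorm _ (hFm hz)
      have h2 : ‖G z‖ ≤ 1 := hballnorm _ (hGm hz)
      have h3 : ‖G z‖^k ≤ 1 := pow_le_one₀ (norm_nonneg _) h2
      nlinarith [norm_nonneg (F z), pow_nonneg (norm_nonneg (G z)) k]
    have hlim : ∀ᵐ (θ : ℝ) ∂μ, Tendsto
        (fun r : ℝ => F ((r:ℂ) * Complex.exp ((θ:ℂ) * Complex.I)) *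
          (G ((r:ℂ) * Complex.exp ((θ:ℂ) * Complex.I)))^k)
        (nhdsWithin 1 (Set.Iio 1)) (nhds (B n θ * (B (n+1) θ)^k)) := by
      filter_upwards [hlimF, hlimG] with θ h1 h2
      exact h1.mul (h2.pow k)
    have := circle_boundary hd hbd hlim
    rw [this, hF0, zero_mul]
  -- Moment 2 : ∫ Bₙ₊₁^(k+1) = 0
  have M2 : ∀ k : ℕ, ∫ θ, (B (n+1) θ)^(k+1) ∂μ = 0 := by
    intro k
    have hd : DifferentiableOn ℂ (fun z => (G z)^(k+1)) D := hGd.pow (k+1)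
    have hbd : ∀ z ∈ D, ‖(G z)^(k+1)‖ ≤ 1 := by
      intro z hz
      rw [norm_pow]
      exact pow_le_one₀ (norm_nonneg _) (hballnorm _ (hGm hz))
    have hlim : ∀ᵐ (θ : ℝ) ∂μ, Tendsto
        (fun r : ℝ => (G ((r:ℂ) * Complex.exp ((θ:ℂ) * Complex.I)))^(k+1))
        (nhdsWithin 1 (Set.Iio 1)) (nhds ((B (n+1) θ)^(k+1))) := by
      filter_upwards [hlimG] with θ h2
      exact h2.pow (k+1)
    have := circle_boundary hd hbd hlim
    rw [this, hG0, zero_pow (Nat.succ_ne_zero k)]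
  have M2all : ∀ j : ℕ, ∫ θ, (B (n+1) θ)^j ∂μ = if j = 0 then 1 else 0 := by
    intro j
    cases j with
    | zero => simp
    | succ j => simpa using M2 j
  -- Moment 3
  set Ψ : ℝ → ℂ := fun θ => B (n+1) θ / B n θ with hΨdef
  have M3 : ∀ j : ℕ, ∫ θ, (B n θ)^j * (Ψ θ)^(j+1) ∂μ
      = if j = 0 then deriv f 0 else 0 := by
    intro j
    have hd : DifferentiableOn ℂ (fun z => (F z)^j * (ψ z)^(j+1)) D :=
      (hFd.pow j).mul (hψd.pow (j+1))
    have hbd : ∀ z ∈ D, ‖(F z)^j * (ψ z)^(j+1)‖ ≤ 1 := by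
      intro z hz
      rw [norm_mul, norm_pow, norm_pow]
      have h3 : ‖F z‖^j ≤ 1 := pow_le_one₀ (norm_nonneg _) (hballnorm _ (hFm hz))
      have h4 : ‖ψ z‖^(j+1) ≤ 1 := pow_le_one₀ (norm_nonneg _) (hψb _ hz)
      nlinarith [pow_nonneg (norm_nonneg (F z)) j, pow_nonneg (norm_nonneg (ψ z)) (j+1)]
    have hlim : ∀ᵐ (θ : ℝ) ∂μ, Tendsto
        (fun r : ℝ => (F ((r:ℂ) * Complex.exp ((θ:ℂ) * Complex.I)))^j *
          (ψ ((r:ℂ) * Complex.exp ((θ:ℂ) * Complex.I)))^(j+1))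
        (nhdsWithin 1 (Set.Iio 1)) (nhds ((B n θ)^j * (Ψ θ)^(j+1))) := by
      filter_upwards [hlimF, hlimG, hnormF] with θ h1 h2 h3
      have hne : B n θ ≠ 0 := by
        intro h0
        rw [h0, norm_zero] at h3
        norm_num at h3
      have hev : ∀ᶠ (r : ℝ) in nhdsWithin (1:ℝ) (Set.Iio 1),
          F ((r:ℂ) * Complex.exp ((θ:ℂ) * Complex.I)) ≠ 0 := h1.eventually (eventually_ne_nhds hne)
      have hdiv : Tendsto
          (fun r : ℝ => G ((r:ℂ) * Complex.exp ((θ:ℂ) * Complex.I)) /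
            F ((r:ℂ) * Complex.exp ((θ:ℂ) * Complex.I)))
          (nhdsWithin 1 (Set.Iio 1)) (nhds (Ψ θ)) := h2.div h1 hne
      have hψr : Tendsto
          (fun r : ℝ => ψ ((r:ℂ) * Complex.exp ((θ:ℂ) * Complex.I)))
          (nhdsWithin 1 (Set.Iio 1)) (nhds (Ψ θ)) := by
        refine Tendsto.congr' ?_ hdiv
        filter_upwards [hev] with r hr
        rw [hGF ((r:ℂ) * Complex.exp ((θ:ℂ) * Complex.I))]
        exact mul_div_cancel_left₀ _ hr
      exact (h1.pow j).mul (hψr.pow (j+1))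
    have := circle_boundary hd hbd hlim
    rw [this, hF0, hψ0]
    cases j with
    | zero => simp
    | succ j => simp [zero_pow (Nat.succ_ne_zero j)]
  -- measurability and integrability helpers
  have hmeasB' : Measurable (B (n+1)) := hBmeas (n+1)
  have hconj : Measurable (starRingEnd ℂ) := RCLike.continuous_conj.measurable
  have hintC : ∀ (g : ℝ → ℂ) (c : ℝ), Measurable g → (∀ᵐ (θ:ℝ) ∂μ, ‖g θ‖ ≤ c) →
      Integrable g μ :=
    fun g c hg hb => Integrable.mono' (integrable_const c) hg.aestronglyMeasurable hb
  -- a.e. structure of boundary values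
  have hae : ∀ᵐ (θ:ℝ) ∂μ, ‖B n θ‖ = 1 ∧ ‖B (n+1) θ‖ = 1 ∧
      B (n+1) θ = B n θ * Ψ θ ∧ B n θ * starRingEnd ℂ (B n θ) = 1 ∧
      B (n+1) θ * starRingEnd ℂ (B (n+1) θ) = 1 := by
    filter_upwards [hnormF, hnormG] with θ h1 h2
    have hne : B n θ ≠ 0 := fun h0 => by simp [h0] at h1
    have mc : ∀ w : ℂ, ‖w‖ = 1 → w * starRingEnd ℂ w = 1 := by
      intro w hw
      rw [Complex.mul_conj, Complex.normSq_eq_norm_sq, hw]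
      norm_num
    have h3 : B (n+1) θ = B n θ * Ψ θ := by
      show B (n+1) θ = B n θ * (B (n+1) θ / B n θ)
      field_simp
    exact ⟨h1, h2, h3, mc _ h1, mc _ h2⟩
  have mom1 : ∀ k : ℕ, ∫ θ, (B n θ - lam * B (n+1) θ) * (B (n+1) θ)^k ∂μ = 0 := by
    intro k
    have hrw : (fun θ => (B n θ - lam * B (n+1) θ) * (B (n+1) θ)^k)
        = fun θ => B n θ * (B (n+1) θ)^k - lam * (B (n+1) θ)^(k+1) := by
      funext θ; ring
    have hi1 : Integrable (fun θ => B n θ * (B (n+1) θ)^k) μ := by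
      apply hintC _ 1 ((hBmeas n).mul (hmeasB'.pow_const k))
      filter_upwards [hnormF, hnormG] with θ h1 h2
      simp only [Pi.mul_apply]; rw [norm_mul, norm_pow, h1, h2]; norm_num
    have hi2 : Integrable (fun θ => lam * (B (n+1) θ)^(k+1)) μ := by
      apply hintC _ ‖lam‖ ((hmeasB'.pow_const (k+1)).const_mul lam)
      filter_upwards [hnormG] with θ h2
      rw [norm_mul, norm_pow, h2]; norm_num
    rw [hrw, integral_sub hi1 hi2, M1 k, integral_const_mul lam _, M2 k]
    simp
  have mom2 : ∀ j : ℕ,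
      ∫ θ, (B n θ - lam * B (n+1) θ) * (starRingEnd ℂ (B (n+1) θ))^(j+1) ∂μ = 0 := by
    intro j
    have hmc : Measurable fun θ => starRingEnd ℂ (B (n+1) θ) := hconj.comp hmeasB'
    have hrw : (fun θ => (B n θ - lam * B (n+1) θ) * (starRingEnd ℂ (B (n+1) θ))^(j+1))
        = fun θ => B n θ * (starRingEnd ℂ (B (n+1) θ))^(j+1)
            - lam * (B (n+1) θ * (starRingEnd ℂ (B (n+1) θ))^(j+1)) := by
      funext θ; ring
    have hi1 : Integrable (fun θ => B n θ * (starRingEnd ℂ (B (n+1) θ))^(j+1)) μ := by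
      apply hintC _ 1 ((hBmeas n).mul (hmc.pow_const (j+1)))
      filter_upwards [hnormF, hnormG] with θ h1 h2
      simp only [Pi.mul_apply]; rw [norm_mul, norm_pow, h1, RCLike.norm_conj, h2]; norm_num
    have hi2 : Integrable
        (fun θ => lam * (B (n+1) θ * (starRingEnd ℂ (B (n+1) θ))^(j+1))) μ := by
      apply hintC _ ‖lam‖ (((hmeasB'.mul (hmc.pow_const (j+1)))).const_mul lam)
      filter_upwards [hnormG] with θ h2
      simp only [Pi.mul_apply]; rw [norm_mul, norm_mul, norm_pow, RCLike.norm_conj, h2]; norm_num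
    rw [hrw, integral_sub hi1 hi2, integral_const_mul lam _]
    have hT1 : ∫ θ, B n θ * (starRingEnd ℂ (B (n+1) θ))^(j+1) ∂μ
        = starRingEnd ℂ (∫ θ, (B n θ)^j * (Ψ θ)^(j+1) ∂μ) := by
      rw [← integral_conj]
      apply integral_congr_ae
      filter_upwards [hae] with θ hθ
      obtain ⟨h1, h2, h3, h4, h5⟩ := hθ
      simp only [h3, map_mul, map_pow, mul_pow]
      linear_combination ((starRingEnd ℂ) (B n θ))^j * ((starRingEnd ℂ) (Ψ θ))^(j+1) * h4
    have hT2 : ∫ θ, B (n+1) θ * (starRingEnd ℂ (B (n+1) θ))^(j+1) ∂μ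
        = starRingEnd ℂ (∫ θ, (B (n+1) θ)^j ∂μ) := by
      rw [← integral_conj]
      apply integral_congr_ae
      filter_upwards [hae] with θ hθ
      obtain ⟨h1, h2, h3, h4, h5⟩ := hθ
      simp only [map_pow]
      linear_combination ((starRingEnd ℂ) (B (n+1) θ))^j * h5
    rw [hT1, hT2, M3 j, M2all j]
    cases j with
    | zero => simp [hlam]
    | succ j => simp
  -- normalized boundary function with values on the unit circle
  set B2 : ℝ → ℂ := fun θ => if ‖B (n+1) θ‖ = 1 then B (n+1) θ else 1 with hB2def
  have hB2me : Measurable B2 :=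
    Measurable.ite (hmeasB'.norm (measurableSet_singleton 1)) hmeasB' measurable_const
  have hB2norm : ∀ θ, ‖B2 θ‖ = 1 := by
    intro θ
    show ‖if ‖B (n+1) θ‖ = 1 then B (n+1) θ else 1‖ = 1
    by_cases h : ‖B (n+1) θ‖ = 1
    · rw [if_pos h]; exact h
    · rw [if_neg h]; simp
  have hB2ae : ∀ᵐ (θ:ℝ) ∂μ, B2 θ = B (n+1) θ := by
    filter_upwards [hnormG] with θ h
    show (if ‖B (n+1) θ‖ = 1 then B (n+1) θ else 1) = B (n+1) θ
    rw [if_pos h]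
  have momab : ∀ a b : ℕ,
      ∫ θ, (B n θ - lam * B (n+1) θ) * ((B2 θ)^a * (starRingEnd ℂ (B2 θ))^b) ∂μ = 0 := by
    intro a b
    rcases le_or_gt b a with hba | hab
    · obtain ⟨c, hc⟩ : ∃ c, a = c + b := ⟨a - b, by omega⟩
      have hrw : ∀ᵐ (θ:ℝ) ∂μ,
          (B n θ - lam * B (n+1) θ) * ((B2 θ)^a * (starRingEnd ℂ (B2 θ))^b)
          = (B n θ - lam * B (n+1) θ) * (B (n+1) θ)^(a-b) := by
        filter_upwards [hae, hB2ae] with θ hθ h6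
        obtain ⟨h1, h2, h3, h4, h5⟩ := hθ
        rw [h6]
        congr 1
        rw [hc, Nat.add_sub_cancel, pow_add, mul_assoc, ← mul_pow, h5, one_pow, mul_one]
      rw [integral_congr_ae hrw, mom1 (a-b)]
    · obtain ⟨j, hj⟩ : ∃ j : ℕ, b = a + (j + 1) := ⟨b - a - 1, by omega⟩
      have hrw : ∀ᵐ (θ:ℝ) ∂μ,
          (B n θ - lam * B (n+1) θ) * ((B2 θ)^a * (starRingEnd ℂ (B2 θ))^b)
          = (B n θ - lam * B (n+1) θ) * (starRingEnd ℂ (B (n+1) θ))^(j+1) := by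
        filter_upwards [hae, hB2ae] with θ hθ h6
        obtain ⟨h1, h2, h3, h4, h5⟩ := hθ
        rw [h6]
        congr 1
        rw [hj, pow_add, ← mul_assoc, ← mul_pow, h5, one_pow, one_mul]
      rw [integral_congr_ae hrw, mom2 j]
  -- abbreviate the martingale difference
  set Y : ℝ → ℂ := fun θ => B n θ - lam * B (n+1) θ with hYdef
  have hYme : Measurable Y := (hBmeas n).sub (hmeasB'.const_mul lam)
  have hYbd : ∀ᵐ (θ:ℝ) ∂μ, ‖Y θ‖ ≤ 1 + ‖lam‖ := by
    filter_upwards [hnormF, hnormG] with θ h1 h2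
    calc ‖B n θ - lam * B (n+1) θ‖ ≤ ‖B n θ‖ + ‖lam * B (n+1) θ‖ := norm_sub_le _ _
      _ = 1 + ‖lam‖ := by rw [h1, norm_mul, h2, mul_one]
  have hYint : Integrable Y μ := hintC _ _ hYme hYbd
  have hCpos : (0:ℝ) < 1 + ‖lam‖ := by positivity
  -- the linear span of the monomials in B2 and its conjugate
  set Msp : Submodule ℂ (ℝ → ℂ) := Submodule.span ℂ
    {h : ℝ → ℂ | ∃ a b : ℕ, h = fun θ => (B2 θ)^a * (starRingEnd ℂ (B2 θ))^b} with hMsp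
  have hMmono : ∀ a b : ℕ, (fun θ => (B2 θ)^a * (starRingEnd ℂ (B2 θ))^b) ∈ Msp :=
    fun a b => Submodule.subset_span ⟨a, b, rfl⟩
  have hMmul : ∀ p ∈ Msp, ∀ q ∈ Msp, p * q ∈ Msp := by
    intro p hp
    induction hp using Submodule.span_induction with
    | mem x hx =>
      obtain ⟨a, b, rfl⟩ := hx
      intro q hq
      induction hq using Submodule.span_induction with
      | mem y hy =>
        obtain ⟨c, d, rfl⟩ := hy
        have heq : (fun θ => (B2 θ)^a * (starRingEnd ℂ (B2 θ))^b) *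
            (fun θ => (B2 θ)^c * (starRingEnd ℂ (B2 θ))^d)
            = fun θ => (B2 θ)^(a+c) * (starRingEnd ℂ (B2 θ))^(b+d) := by
          funext θ
          simp only [Pi.mul_apply]
          rw [pow_add, pow_add]; ring
        rw [heq]; exact hMmono (a+c) (b+d)
      | zero => rw [mul_zero]; exact Submodule.zero_mem _
      | add y z hy hz ihy ihz => rw [mul_add]; exact Submodule.add_mem _ ihy ihz
      | smul c y hy ihy => rw [mul_smul_comm]; exact Submodule.smul_mem _ _ ihy
    | zero => intro q hq; rw [zero_mul]; exact Submodule.zero_mem _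
    | add x y hx hy ihx ihy =>
      intro q hq; rw [add_mul]; exact Submodule.add_mem _ (ihx q hq) (ihy q hq)
    | smul c x hx ihx =>
      intro q hq; rw [smul_mul_assoc]; exact Submodule.smul_mem _ _ (ihx q hq)
  have hMstar : ∀ p ∈ Msp, star p ∈ Msp := by
    intro p hp
    induction hp using Submodule.span_induction with
    | mem x hx =>
      obtain ⟨a, b, rfl⟩ := hx
      have heq : star (fun θ => (B2 θ)^a * (starRingEnd ℂ (B2 θ))^b)
          = fun θ => (B2 θ)^b * (starRingEnd ℂ (B2 θ))^a := by
        funext θ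
        simp only [Pi.star_apply, starRingEnd_apply, star_mul', star_pow, star_star]
        ring
      rw [heq]; exact hMmono b a
    | zero => rw [star_zero]; exact Submodule.zero_mem _
    | add x y hx hy ihx ihy => rw [star_add]; exact Submodule.add_mem _ ihx ihy
    | smul c x hx ihx =>
      rw [star_smul]; exact Submodule.smul_mem _ _ ihx
  -- the integral of Y against anything in the span vanishes
  have hLM : ∀ p ∈ Msp, Integrable (fun θ => Y θ * p θ) μ ∧
      ∫ θ, Y θ * p θ ∂μ = 0 := by
    intro p hp
    induction hp using Submodule.span_induction with
    | mem x hx =>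
      obtain ⟨a, b, rfl⟩ := hx
      constructor
      · apply hintC _ (1 + ‖lam‖)
          (hYme.mul ((hB2me.pow_const a).mul ((hconj.comp hB2me).pow_const b)))
        filter_upwards [hYbd] with θ h
        simp only [Pi.mul_apply, Function.comp_apply, norm_mul, norm_pow, RCLike.norm_conj, hB2norm,
          one_pow, mul_one, one_mul]
        exact h
      · exact momab a b
    | zero =>
      have heq : (fun θ => Y θ * (0 : ℝ → ℂ) θ) = fun _ => (0:ℂ) := by funext θ; simp
      rw [heq]
      exact ⟨integrable_const 0, by simp⟩
    | add x y hx hy ihx ihy =>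
      have heq : (fun θ => Y θ * (x + y) θ)
          = fun θ => Y θ * x θ + Y θ * y θ := by funext θ; simp [Pi.add_apply]; ring
      rw [heq]
      exact ⟨ihx.1.add ihy.1, by rw [integral_add ihx.1 ihy.1, ihx.2, ihy.2, add_zero]⟩
    | smul c x hx ihx =>
      have heq : (fun θ => Y θ * (c • x) θ) = fun θ => c • (Y θ * x θ) := by
        funext θ; simp [Pi.smul_apply, smul_eq_mul]; ring
      rw [heq]
      exact ⟨ihx.1.smul c, by rw [integral_smul, ihx.2, smul_zero]⟩
  -- the unit sphere
  set sph : Set ℂ := Metric.sphere (0:ℂ) 1 with hsphdef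
  have hmemsph : ∀ θ, B2 θ ∈ sph := by
    intro θ
    rw [hsphdef, mem_sphere_zero_iff_norm]
    exact hB2norm θ
  set bmap : ℝ → sph := fun θ => ⟨B2 θ, hmemsph θ⟩ with hbmapdef
  have hbme : Measurable bmap := hB2me.subtype_mk
  have hucomp : ∀ u : C(sph, ℂ), Measurable fun θ => u (bmap θ) :=
    fun u => (map_continuous u).measurable.comp hbme
  have hLint : ∀ u : C(sph, ℂ), Integrable (fun θ => Y θ * u (bmap θ)) μ := by
    intro u
    apply hintC _ ((1 + ‖lam‖) * ‖u‖) (hYme.mul (hucomp u))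
    filter_upwards [hYbd] with θ h
    rw [Pi.mul_apply, norm_mul]
    exact mul_le_mul h (u.norm_coe_le_norm _) (norm_nonneg _) hCpos.le
  -- star-closure elements give functions in the span
  have hA : ∀ u : C(sph, ℂ), u ∈ (polynomialFunctions sph).starClosure →
      (fun θ => u (bmap θ)) ∈ Msp := by
    intro u hu
    rw [polynomialFunctions.starClosure_eq_adjoin_X] at hu
    induction hu using StarAlgebra.adjoin_induction with
    | mem x hx =>
      rw [Set.mem_singleton_iff] at hx
      subst hx
      have heq : (fun θ => ((Polynomial.toContinuousMapOnAlgHom sph) Polynomial.X) (bmap θ))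
          = fun θ => (B2 θ)^1 * (starRingEnd ℂ (B2 θ))^0 := by
        funext θ
        simp [Polynomial.toContinuousMapOnAlgHom_apply, Polynomial.toContinuousMapOn_apply,
          Polynomial.toContinuousMap_apply]
        rfl
      rw [heq]; exact hMmono 1 0
    | algebraMap r =>
      have heq : (fun θ => (algebraMap ℂ C(sph,ℂ) r) (bmap θ))
          = r • fun θ => (B2 θ)^0 * (starRingEnd ℂ (B2 θ))^0 := by
        funext θ
        simp [Algebra.algebraMap_eq_smul_one]
      rw [heq]; exact Submodule.smul_mem _ _ (hMmono 0 0)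
    | add x y hx hy ihx ihy =>
      have heq : (fun θ => (x + y) (bmap θ))
          = (fun θ => x (bmap θ)) + fun θ => y (bmap θ) := by
        funext θ; simp
      rw [heq]; exact Submodule.add_mem _ ihx ihy
    | mul x y hx hy ihx ihy =>
      have heq : (fun θ => (x * y) (bmap θ))
          = (fun θ => x (bmap θ)) * fun θ => y (bmap θ) := by
        funext θ; simp
      rw [heq]; exact hMmul _ ihx _ ihy
    | star x hx ihx =>
      have heq : (fun θ => (star x) (bmap θ)) = star fun θ => x (bmap θ) := by
        funext θ; simp
      rw [heq]; exact hMstar _ ihx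
  -- vanishing against all continuous functions on the sphere
  have hLB : ∀ u : C(sph, ℂ), ∫ θ, Y θ * u (bmap θ) ∂μ = 0 := by
    intro u
    have h1 : u ∈ (polynomialFunctions sph).starClosure.topologicalClosure := by
      rw [polynomialFunctions.starClosure_topologicalClosure sph]
      exact StarSubalgebra.mem_top
    have humem : u ∈ closure ((polynomialFunctions sph).starClosure : Set C(sph,ℂ)) := by
      rw [← StarSubalgebra.topologicalClosure_coe]
      exact SetLike.mem_coe.mpr h1
    have key : ∀ ε : ℝ, 0 < ε → ‖∫ θ, Y θ * u (bmap θ) ∂μ‖ ≤ (1 + ‖lam‖) * ε := by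
      intro ε hε
      obtain ⟨v, hvmem, hvdist⟩ := Metric.mem_closure_iff.mp humem ε hε
      have hv0 : ∫ θ, Y θ * v (bmap θ) ∂μ = 0 := (hLM _ (hA v hvmem)).2
      have hsub : ∫ θ, Y θ * u (bmap θ) ∂μ
          = ∫ θ, (Y θ * u (bmap θ) - Y θ * v (bmap θ)) ∂μ := by
        rw [integral_sub (hLint u) (hLint v), hv0, sub_zero]
      rw [hsub]
      have hbound : ∀ᵐ (θ:ℝ) ∂μ, ‖Y θ * u (bmap θ) - Y θ * v (bmap θ)‖ ≤ (1 + ‖lam‖) * ε := by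
        filter_upwards [hYbd] with θ h
        rw [← mul_sub, norm_mul]
        have hd : ‖u (bmap θ) - v (bmap θ)‖ ≤ ε := by
          have h2 := ContinuousMap.dist_apply_le_dist (f := u) (g := v) (bmap θ)
          rw [dist_eq_norm] at h2
          linarith
        exact mul_le_mul h hd (norm_nonneg _) hCpos.le
      calc ‖∫ θ, (Y θ * u (bmap θ) - Y θ * v (bmap θ)) ∂μ‖
          ≤ (1 + ‖lam‖) * ε * (μ Set.univ).toReal := norm_integral_le_of_norm_le_const hbound
        _ = (1 + ‖lam‖) * ε := by simp
    have hle : ‖∫ θ, Y θ * u (bmap θ) ∂μ‖ ≤ 0 := by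
      apply le_of_forall_pos_le_add
      intro ε hε
      have hk := key (ε / (1 + ‖lam‖)) (by positivity)
      calc ‖∫ θ, Y θ * u (bmap θ) ∂μ‖ ≤ (1 + ‖lam‖) * (ε / (1 + ‖lam‖)) := hk
        _ = ε := by field_simp
        _ ≤ 0 + ε := by simp
    exact norm_le_zero_iff.mp hle
  -- the pushforward of μ under B2
  set ρ : Measure ℂ := Measure.map B2 μ with hρdef
  haveI : IsFiniteMeasure ρ := Measure.isFiniteMeasure_map μ B2
  -- set integrals of Y over preimages vanish
  have hind : ∀ T : Set ℂ, MeasurableSet T → ∫ θ in (B (n+1))⁻¹' T, Y θ ∂μ = 0 := by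
    intro T hT
    have hiTme : Measurable (Set.indicator T (fun _ => (1:ℂ))) :=
      measurable_const.indicator hT
    have h1 : ∫ θ in (B (n+1))⁻¹' T, Y θ ∂μ
        = ∫ θ, Y θ * Set.indicator T (fun _ => (1:ℂ)) (B2 θ) ∂μ := by
      rw [← integral_indicator (hmeasB' hT)]
      apply integral_congr_ae
      filter_upwards [hB2ae] with θ h6
      rw [h6]
      by_cases h : B (n+1) θ ∈ T
      · rw [Set.indicator_of_mem h, Set.indicator_of_mem (Set.mem_preimage.mpr h)]
        simp
      · rw [Set.indicator_of_notMem h,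
          Set.indicator_of_notMem (show θ ∉ B (n+1) ⁻¹' T from h)]
        simp
    rw [h1]
    have hint1 : Integrable (fun θ => Y θ * Set.indicator T (fun _ => (1:ℂ)) (B2 θ)) μ := by
      apply hintC _ (1 + ‖lam‖) (hYme.mul (hiTme.comp hB2me))
      filter_upwards [hYbd] with θ h
      rw [Pi.mul_apply, norm_mul]
      simp only [Function.comp_apply]
      have hle1 : ‖Set.indicator T (fun _ => (1:ℂ)) (B2 θ)‖ ≤ 1 := by
        by_cases hm : B2 θ ∈ T
        · rw [Set.indicator_of_mem hm]; simp
        · rw [Set.indicator_of_notMem hm]; simp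
      nlinarith [norm_nonneg (Y θ)]
    have hiT : Integrable (Set.indicator T (fun _ => (1:ℂ))) ρ :=
      (integrable_const 1).indicator hT
    have key : ∀ ε : ℝ, 0 < ε →
        ‖∫ θ, Y θ * Set.indicator T (fun _ => (1:ℂ)) (B2 θ) ∂μ‖ ≤ (1 + ‖lam‖) * ε := by
      intro ε hε
      obtain ⟨g, hg, hgint⟩ := hiT.exists_boundedContinuous_integral_sub_le hε
      set u : C(sph, ℂ) := g.toContinuousMap.restrict sph with hudef
      have hueq : ∀ θ, u (bmap θ) = g (B2 θ) := fun θ => rfl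
      have hsplit : ∫ θ, Y θ * Set.indicator T (fun _ => (1:ℂ)) (B2 θ) ∂μ
          = ∫ θ, (Y θ * (Set.indicator T (fun _ => (1:ℂ)) (B2 θ) - u (bmap θ))) ∂μ := by
        have heq : (fun θ => Y θ * (Set.indicator T (fun _ => (1:ℂ)) (B2 θ) - u (bmap θ)))
            = fun θ => Y θ * Set.indicator T (fun _ => (1:ℂ)) (B2 θ) - Y θ * u (bmap θ) := by
          funext θ; ring
        rw [heq, integral_sub hint1 (hLint u), hLB u, sub_zero]
      rw [hsplit]
      have hnme : Measurable fun w : ℂ => ‖Set.indicator T (fun _ => (1:ℂ)) w - g w‖ :=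
        (hiTme.sub g.continuous.measurable).norm
      have hpull : ∫ θ, ‖Set.indicator T (fun _ => (1:ℂ)) (B2 θ) - g (B2 θ)‖ ∂μ
          = ∫ w, ‖Set.indicator T (fun _ => (1:ℂ)) w - g w‖ ∂ρ := by
        rw [hρdef, integral_map hB2me.aemeasurable hnme.aestronglyMeasurable]
      have hnint : Integrable
          (fun θ => ‖Set.indicator T (fun _ => (1:ℂ)) (B2 θ) - g (B2 θ)‖) μ := by
        have hmp := (hiT.sub hgint).norm
        rw [hρdef] at hmp
        exact (integrable_map_measure hnme.aestronglyMeasurable hB2me.aemeasurable).mp hmp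
      have hdint : Integrable
          (fun θ => Y θ * (Set.indicator T (fun _ => (1:ℂ)) (B2 θ) - u (bmap θ))) μ := by
        apply (hint1.sub (hLint u)).congr
        filter_upwards with θ
        simp only [Pi.sub_apply]
        ring
      calc ‖∫ θ, (Y θ * (Set.indicator T (fun _ => (1:ℂ)) (B2 θ) - u (bmap θ))) ∂μ‖
          ≤ ∫ θ, ‖Y θ * (Set.indicator T (fun _ => (1:ℂ)) (B2 θ) - u (bmap θ))‖ ∂μ :=
            norm_integral_le_integral_norm _
        _ ≤ ∫ θ, (1 + ‖lam‖) * ‖Set.indicator T (fun _ => (1:ℂ)) (B2 θ) - g (B2 θ)‖ ∂μ := by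
            apply integral_mono_ae hdint.norm (hnint.const_mul _)
            filter_upwards [hYbd] with θ h
            rw [norm_mul, hueq θ]
            exact mul_le_mul_of_nonneg_right h (norm_nonneg _)
        _ = (1 + ‖lam‖) * ∫ θ, ‖Set.indicator T (fun _ => (1:ℂ)) (B2 θ) - g (B2 θ)‖ ∂μ :=
            integral_const_mul _ _
        _ ≤ (1 + ‖lam‖) * ε := by
            rw [hpull]
            exact mul_le_mul_of_nonneg_left hg hCpos.le
    have hle : ‖∫ θ, Y θ * Set.indicator T (fun _ => (1:ℂ)) (B2 θ) ∂μ‖ ≤ 0 := by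
      apply le_of_forall_pos_le_add
      intro ε hε
      have hk := key (ε / (1 + ‖lam‖)) (by positivity)
      calc ‖∫ θ, Y θ * Set.indicator T (fun _ => (1:ℂ)) (B2 θ) ∂μ‖
          ≤ (1 + ‖lam‖) * (ε / (1 + ‖lam‖)) := hk
        _ = ε := by field_simp
        _ ≤ 0 + ε := by simp
    exact norm_le_zero_iff.mp hle
  -- conclude via the characterization of conditional expectation
  have hm : MeasurableSpace.comap (B (n+1)) inferInstance ≤
      (inferInstance : MeasurableSpace ℝ) := hmeasB'.comap_le
  haveI : SigmaFinite (μ.trim hm) := inferInstance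
  refine (ae_eq_condExp_of_forall_setIntegral_eq hm hYint
    (fun s _ _ => integrableOn_zero) ?_ ?_).symm
  · intro s hs _
    obtain ⟨T, hT, rfl⟩ := hs
    simp only [Pi.zero_apply, integral_zero]
    exact (hind T hT).symm
  · exact ⟨0, @stronglyMeasurable_zero ℝ ℂ (MeasurableSpace.comap (B (n+1)) inferInstance) _ _,
      Filter.EventuallyEq.rfl⟩
end

section
/- Let f be an inner function with f(0) = 0, λ = conj(f'(0)), μ = conj(f''(0))/2, and Yₙ = f^{∘n} − λ f^{∘(n+1)}. Then E[Yₙ² | 𝓕_{n+1}] = μ·f^{∘(n+1)} almost everywhere on 𝕋. -/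
open MeasureTheory Filter Metric Complex Set

instance : IsProbabilityMeasure circleMeasure := by
  constructor
  simp only [circleMeasure, Measure.smul_apply, Measure.restrict_apply MeasurableSet.univ,
    Set.univ_inter, Real.volume_Ioc, smul_eq_mul, sub_zero]
  rw [ENNReal.inv_mul_cancel] <;>
  simp [Real.pi_pos, Real.pi_ne_zero, Real.two_pi_pos, ENNReal.mul_eq_top]

/-- Mean value property over `circleMeasure`. -/
lemma meanValue_s13 (h : ℂ → ℂ) (hd : DifferentiableOn ℂ h (ball 0 1)) {r : ℝ}
    (h0 : 0 < r) (h1 : r < 1) :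
    ∫ θ, h ((r : ℂ) * Complex.exp ((θ : ℂ) * Complex.I)) ∂circleMeasure = h 0 := by
  have hd' : DiffContOnCl ℂ h (ball 0 r) := by
    refine DiffContOnCl.mk (hd.mono (ball_subset_ball h1.le)) ?_
    refine (hd.continuousOn).mono ?_
    rw [closure_ball (0:ℂ) (ne_of_gt (by exact_mod_cast h0))]
    exact closedBall_subset_ball (by exact_mod_cast h1)
  have key := hd'.circleIntegral_sub_inv_smul (w := 0) (by simpa using h0)
  rw [circleIntegral] at key
  simp only [deriv_circleMap, smul_eq_mul, sub_zero] at key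
  have hne : ∀ θ : ℝ, circleMap 0 r θ ≠ 0 := fun θ => circleMap_ne_center (ne_of_gt h0)
  have key2 : (∫ θ in (0:ℝ)..2 * Real.pi, Complex.I * h (circleMap 0 r θ)) = 2 * Real.pi * Complex.I * h 0 := by
    rw [← key]
    congr 1
    ext θ
    field_simp [hne θ]
  rw [intervalIntegral.integral_const_mul] at key2
  have key3 : (∫ θ in (0:ℝ)..2 * Real.pi, h (circleMap 0 r θ)) = 2 * Real.pi * h 0 := by
    refine mul_left_cancel₀ Complex.I_ne_zero (key2.trans (by ring))
  have hcm : ∀ θ : ℝ, circleMap 0 r θ = (r : ℂ) * Complex.exp ((θ : ℂ) * Complex.I) := by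
    intro θ; simp [circleMap]
  rw [circleMeasure]
  rw [integral_smul_measure]
  rw [← intervalIntegral.integral_of_le Real.two_pi_pos.le] at *
  simp only [← hcm]
  rw [key3]
  have : ((ENNReal.ofReal (2 * Real.pi))⁻¹).toReal = (2 * Real.pi)⁻¹ := by
    rw [ENNReal.toReal_inv, ENNReal.toReal_ofReal Real.two_pi_pos.le]
  rw [this, real_smul]
  have h2π : (2 * Real.pi : ℝ) ≠ 0 := ne_of_gt Real.two_pi_pos
  push_cast
  have : ((2:ℂ) * Real.pi) ≠ 0 := by exact_mod_cast h2π
  field_simp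

lemma circle_mem_ball {r : ℝ} (h0 : 0 ≤ r) (h1 : r < 1) (θ : ℝ) :
    (r : ℂ) * Complex.exp ((θ : ℂ) * Complex.I) ∈ ball (0:ℂ) 1 := by
  rw [mem_ball_zero_iff]
  rw [norm_mul]
  simp only [Complex.norm_real, Real.norm_eq_abs, _root_.abs_of_nonneg h0]
  rw [Complex.norm_exp_ofReal_mul_I]
  simpa using h1

lemma boundary_integral_eq (h : ℂ → ℂ) (hd : DifferentiableOn ℂ h (ball 0 1))
    (M : ℝ) (hM : ∀ z ∈ ball (0:ℂ) 1, ‖h z‖ ≤ M) (H : ℝ → ℂ)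
    (hH : ∀ᵐ (θ : ℝ) ∂circleMeasure, Tendsto (fun r : ℝ => h ((r:ℂ) * Complex.exp ((θ:ℂ) * Complex.I)))
      (nhdsWithin 1 (Set.Iio 1)) (nhds (H θ))) :
    Integrable H circleMeasure ∧ ∫ θ, H θ ∂circleMeasure = h 0 := by
  set rk : ℕ → ℝ := fun k => 1 - (k + 2 : ℝ)⁻¹ with hrk
  have hrk0 : ∀ k, 0 < rk k := by
    intro k
    have : (k + 2 : ℝ)⁻¹ ≤ 2⁻¹ := by
      apply inv_anti₀ (by norm_num)
      have : (0:ℝ) ≤ k := Nat.cast_nonneg k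
      linarith
    simp only [hrk]; norm_num; linarith
  have hrk1 : ∀ k, rk k < 1 := by
    intro k
    have : (0:ℝ) < (k + 2 : ℝ)⁻¹ := by positivity
    simp only [hrk]; linarith
  have hrktend : Tendsto rk atTop (nhdsWithin 1 (Set.Iio 1)) := by
    rw [tendsto_nhdsWithin_iff]
    constructor
    · have : Tendsto (fun k : ℕ => (k + 2 : ℝ)⁻¹) atTop (nhds 0) := by
        apply Tendsto.comp tendsto_inv_atTop_zero
        apply tendsto_atTop_add_const_right
        exact tendsto_natCast_atTop_atTop
      have := Tendsto.const_sub (1:ℝ) this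
      simpa using this
    · exact Eventually.of_forall fun k => hrk1 k
  set F : ℕ → ℝ → ℂ := fun k θ => h ((rk k : ℂ) * Complex.exp ((θ:ℂ) * Complex.I)) with hF
  have hFcont : ∀ k, Continuous (F k) := by
    intro k
    apply (hd.continuousOn).comp_continuous
    · exact (continuous_const.mul ((Complex.continuous_ofReal.mul continuous_const).cexp))
    · exact fun θ => circle_mem_ball (hrk0 k).le (hrk1 k) θ
  have hFmeas : ∀ k, AEStronglyMeasurable (F k) circleMeasure :=
    fun k => (hFcont k).aestronglyMeasurable
  have hFbound : ∀ k, ∀ᵐ θ ∂circleMeasure, ‖F k θ‖ ≤ M :=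
    fun k => Eventually.of_forall fun θ =>
      hM _ (circle_mem_ball (hrk0 k).le (hrk1 k) θ)
  have hFtend : ∀ᵐ θ ∂circleMeasure, Tendsto (fun k => F k θ) atTop (nhds (H θ)) := by
    filter_upwards [hH] with θ hθ
    exact hθ.comp hrktend
  have hHmeas : AEStronglyMeasurable H circleMeasure :=
    aestronglyMeasurable_of_tendsto_ae atTop hFmeas hFtend
  have hHbound : ∀ᵐ θ ∂circleMeasure, ‖H θ‖ ≤ M := by
    filter_upwards [hFtend] with θ hθ
    exact le_of_tendsto (hθ.norm) (Eventually.of_forall fun k =>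
      hM _ (circle_mem_ball (hrk0 k).le (hrk1 k) θ))
  have hHint : Integrable H circleMeasure :=
    Integrable.mono' (integrable_const M) hHmeas hHbound
  refine ⟨hHint, ?_⟩
  have hdct := MeasureTheory.tendsto_integral_of_dominated_convergence
    (fun _ => M) hFmeas (integrable_const M) hFbound hFtend
  have hval : ∀ k, ∫ θ, F k θ ∂circleMeasure = h 0 :=
    fun k => meanValue_s13 h hd (hrk0 k) (hrk1 k)
  simp only [hval] at hdct
  exact (tendsto_nhds_unique tendsto_const_nhds hdct).symm

lemma iter_facts {f : ℂ → ℂ} (hf : DifferentiableOn ℂ f (ball 0 1))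
    (hmaps : MapsTo f (ball 0 1) (ball 0 1)) (hf0 : f 0 = 0) (k : ℕ) :
    DifferentiableOn ℂ (f^[k]) (ball 0 1) ∧ MapsTo (f^[k]) (ball 0 1) (ball 0 1) ∧
      f^[k] 0 = 0 := by
  induction k with
  | zero => exact ⟨differentiableOn_id, mapsTo_id _, rfl⟩
  | succ k ih =>
    rw [Function.iterate_succ']
    exact ⟨hf.comp ih.1 ih.2.1, hmaps.comp ih.2.1, by simp [Function.comp, ih.2.2, hf0]⟩

section UFacts

variable {f : ℂ → ℂ} (hf : DifferentiableOn ℂ f (ball 0 1))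
    (hmaps : MapsTo f (ball 0 1) (ball 0 1)) (hf0 : f 0 = 0)

lemma ball_nhds : ball (0:ℂ) 1 ∈ nhds (0:ℂ) := isOpen_ball.mem_nhds (mem_ball_self one_pos)

include hf in
lemma u_diff : DifferentiableOn ℂ (dslope f 0) (ball 0 1) :=
  (differentiableOn_dslope ball_nhds).mpr hf

include hf hmaps hf0 in
lemma u_bound : ∀ z ∈ ball (0:ℂ) 1, ‖dslope f 0 z‖ ≤ 1 := by
  intro z hz
  have h2 : MapsTo f (ball 0 1) (ball (f 0) 1) := by rw [hf0]; exact hmaps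
  have := Complex.norm_dslope_le_div_of_mapsTo_ball hf (h2.mono_right ball_subset_closedBall) hz
  simpa using this

include hf0 in
lemma u_eq : ∀ z : ℂ, f z = z * dslope f 0 z := by
  intro z
  rcases eq_or_ne z 0 with rfl | hz
  · rw [hf0, zero_mul]
  · rw [dslope_of_ne f hz, slope_def_field, sub_zero, hf0, sub_zero]
    field_simp

lemma u_zero : dslope f 0 0 = deriv f 0 := dslope_same f 0

include hf in
lemma g2_diff : DifferentiableOn ℂ (dslope (dslope f 0) 0) (ball 0 1) :=
  (differentiableOn_dslope ball_nhds).mpr (u_diff hf)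

include hf hmaps hf0 in
lemma g2_bound : ∀ z ∈ ball (0:ℂ) 1, ‖dslope (dslope f 0) 0 z‖ ≤ 3 := by
  intro z hz
  have hmaps' : MapsTo (dslope f 0) (ball 0 1) (ball (dslope f 0 0) 3) := by
    intro w hw
    rw [mem_ball]
    calc dist (dslope f 0 w) (dslope f 0 0) ≤ ‖dslope f 0 w‖ + ‖dslope f 0 0‖ := by
          rw [dist_eq_norm]; exact norm_sub_le _ _
      _ ≤ 1 + 1 := add_le_add (u_bound hf hmaps hf0 w hw)
          (u_bound hf hmaps hf0 0 (mem_ball_self one_pos))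
      _ < 3 := by norm_num
  have := Complex.norm_dslope_le_div_of_mapsTo_ball (u_diff hf) (hmaps'.mono_right ball_subset_closedBall) hz
  simpa using this

lemma g2_eq (z : ℂ) (hz : z ≠ 0) :
    dslope (dslope f 0) 0 z = (dslope f 0 z - dslope f 0 0) / z := by
  rw [dslope_of_ne _ hz, slope_def_field, sub_zero]

include hf hf0 in
lemma deriv_u_zero : deriv (dslope f 0) 0 = deriv (deriv f) 0 / 2 := by
  set u := dslope f 0 with hu
  have hud : DifferentiableOn ℂ u (ball 0 1) := u_diff hf
  have hana : AnalyticOnNhd ℂ u (ball 0 1) := hud.analyticOnNhd isOpen_ball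
  have hu'd : DifferentiableOn ℂ (deriv u) (ball 0 1) := (hana.deriv).differentiableOn
  have hfz : ∀ z, f z = z * u z := u_eq hf0
  have hstep : ∀ z ∈ ball (0:ℂ) 1, deriv f z = u z + z * deriv u z := by
    intro z hz
    have h1 : DifferentiableAt ℂ u z := hud.differentiableAt (isOpen_ball.mem_nhds hz)
    have he : deriv f z = deriv (fun w => w * u w) z := by
      congr 1; funext w; exact hfz w
    rw [he, deriv_fun_mul differentiableAt_fun_id h1]
    simp
  have heq : deriv f =ᶠ[nhds (0:ℂ)] fun z => u z + z * deriv u z :=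
    Filter.eventually_of_mem ball_nhds hstep
  have h2 : deriv (deriv f) 0 = deriv (fun z => u z + z * deriv u z) 0 := heq.deriv_eq
  have h3 : DifferentiableAt ℂ u 0 := hud.differentiableAt ball_nhds
  have h4 : DifferentiableAt ℂ (deriv u) 0 := hu'd.differentiableAt ball_nhds
  have h5 : deriv (fun z => u z + z * deriv u z) 0 = deriv u 0 + deriv u 0 := by
    rw [deriv_fun_add h3 (differentiableAt_fun_id.fun_mul h4), deriv_fun_mul differentiableAt_fun_id h4]
    simp
  rw [h2, h5]; ring

end UFacts

lemma mul_conj_one {z : ℂ} (h : ‖z‖ = 1) : z * (starRingEnd ℂ) z = 1 := by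
  rw [Complex.mul_conj]
  norm_cast
  simp [Complex.normSq_eq_norm_sq, h]

lemma conj_eq_inv {z : ℂ} (h : ‖z‖ = 1) : (starRingEnd ℂ) z = z⁻¹ := by
  have hz : z ≠ 0 := by intro h0; rw [h0] at h; simp at h
  exact eq_inv_of_mul_eq_one_right (mul_conj_one h)

lemma pow_cancel_right {z : ℂ} (h : z * (starRingEnd ℂ) z = 1) (k m : ℕ) :
    z^(k+m) * ((starRingEnd ℂ) z)^k = z^m := by
  rw [pow_add, mul_comm (z^k) (z^m), mul_assoc, ← mul_pow, h, one_pow, mul_one]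

lemma pow_cancel_left {z : ℂ} (h : z * (starRingEnd ℂ) z = 1) (k m : ℕ) :
    z^k * ((starRingEnd ℂ) z)^(k+m) = ((starRingEnd ℂ) z)^m := by
  rw [pow_add, ← mul_assoc, ← mul_pow, h, one_pow, one_mul]

section Pt
variable (b w lam mu c1 : ℂ)

lemma pt1 (d : ℕ) : (b*w)^d * ((b - lam*(b*w))^2 - mu*(b*w)) =
    b^(d+2)*w^d - (2*lam)*(b^(d+2)*w^(d+1)) + lam^2*(b^(d+2)*w^(d+2))
      - mu*(b^(d+1)*w^(d+1)) := by ring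

variable {b w} (hb : b ≠ 0) (hw : w ≠ 0)
  (hcb : (starRingEnd ℂ) b = b⁻¹) (hcw : (starRingEnd ℂ) w = w⁻¹)

include hb hw hcb hcw in
lemma pt2 : (starRingEnd ℂ) (b*w) * ((b - lam*(b*w))^2 - mu*(b*w)) =
    (starRingEnd ℂ) c1 * (b^1 * w^0) + (starRingEnd ℂ) ((w - c1)/b)
      - (2*lam)*(b^1*w^0) + lam^2*(b^1*w^1) - mu := by
  simp only [map_mul, map_div₀, map_sub, hcb, hcw]
  field_simp
  ring

include hb hw hcb hcw in
lemma pt3 : ((starRingEnd ℂ) (b*w))^2 * ((b - lam*(b*w))^2 - mu*(b*w)) =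
    (starRingEnd ℂ) (b^0*w^2) - (2*lam)*(starRingEnd ℂ) (b^0*w^1) + lam^2
      - mu*(starRingEnd ℂ) (b^1*w^1) := by
  simp only [map_mul, map_pow, hcb, hcw]
  field_simp
  ring

include hb hw hcb hcw in
lemma pt4 (e : ℕ) : ((starRingEnd ℂ) (b*w))^(e+3) * ((b - lam*(b*w))^2 - mu*(b*w)) =
    (starRingEnd ℂ) (b^(e+1)*w^(e+3)) - (2*lam)*(starRingEnd ℂ) (b^(e+1)*w^(e+2))
      + lam^2*(starRingEnd ℂ) (b^(e+1)*w^(e+1)) - mu*(starRingEnd ℂ) (b^(e+2)*w^(e+2)) := by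
  have h1 : ((starRingEnd ℂ) (b*w))^(e+3) * ((b - lam*(b*w))^2 - mu*(b*w)) =
      ((starRingEnd ℂ) (b*w))^(e+1) *
        (((starRingEnd ℂ) (b*w))^2 * ((b - lam*(b*w))^2 - mu*(b*w))) := by ring
  rw [h1, pt3 lam mu hb hw hcb hcw]
  simp only [map_mul, map_pow]
  ring

end Pt


lemma MeasureTheory.Integrable.conj' {f : ℝ → ℂ} {μ : Measure ℝ} (h : Integrable f μ) :
    Integrable (fun x => (starRingEnd ℂ) (f x)) μ := by
  simpa using Complex.conjCLE.toContinuousLinearMap.integrable_comp h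


section Comb
variable {μ : Measure ℝ} {F1 F2 F3 F4 : ℝ → ℂ}

lemma integral_comb4 (a2 a3 a4 : ℂ)
    (h1 : Integrable F1 μ) (h2 : Integrable F2 μ) (h3 : Integrable F3 μ)
    (h4 : Integrable F4 μ) :
    ∫ θ, (F1 θ - a2 * F2 θ + a3 * F3 θ - a4 * F4 θ) ∂μ =
      (∫ θ, F1 θ ∂μ) - a2 * (∫ θ, F2 θ ∂μ) + a3 * (∫ θ, F3 θ ∂μ)
        - a4 * (∫ θ, F4 θ ∂μ) := by
  have h2' : Integrable (fun θ => -a2 * F2 θ) μ := h2.const_mul _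
  have h3' : Integrable (fun θ => a3 * F3 θ) μ := h3.const_mul _
  have h4' : Integrable (fun θ => -a4 * F4 θ) μ := h4.const_mul _
  have h34 : Integrable (fun θ => a3 * F3 θ + -a4 * F4 θ) μ := h3'.add h4'
  have h234 : Integrable (fun θ => -a2 * F2 θ + (a3 * F3 θ + -a4 * F4 θ)) μ := h2'.add h34
  have key : (fun θ => F1 θ - a2 * F2 θ + a3 * F3 θ - a4 * F4 θ) =
      (fun θ => F1 θ + (-a2 * F2 θ + (a3 * F3 θ + -a4 * F4 θ))) := by funext θ; ring
  rw [key, integral_add h1 h234, integral_add h2' h34, integral_add h3' h4',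
      integral_const_mul _ _, integral_const_mul _ _, integral_const_mul _ _]
  ring

lemma integral_comb5 [IsProbabilityMeasure μ] (a1 a2 a3 c : ℂ)
    (h1 : Integrable F1 μ) (h2 : Integrable F2 μ) (h3 : Integrable F3 μ)
    (h4 : Integrable F4 μ) :
    ∫ θ, (a1 * F1 θ + F2 θ - a2 * F3 θ + a3 * F4 θ - c) ∂μ =
      a1 * (∫ θ, F1 θ ∂μ) + (∫ θ, F2 θ ∂μ) - a2 * (∫ θ, F3 θ ∂μ)
        + a3 * (∫ θ, F4 θ ∂μ) - c := by
  have h1' : Integrable (fun θ => a1 * F1 θ) μ := h1.const_mul _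
  have h3' : Integrable (fun θ => -a2 * F3 θ) μ := h3.const_mul _
  have h4' : Integrable (fun θ => a3 * F4 θ) μ := h4.const_mul _
  have hc : Integrable (fun _ : ℝ => -c) μ := integrable_const _
  have h4c : Integrable (fun θ => a3 * F4 θ + -c) μ := h4'.add hc
  have h34 : Integrable (fun θ => -a2 * F3 θ + (a3 * F4 θ + -c)) μ := h3'.add h4c
  have h234 : Integrable (fun θ => F2 θ + (-a2 * F3 θ + (a3 * F4 θ + -c))) μ := h2.add h34
  have key : (fun θ => a1 * F1 θ + F2 θ - a2 * F3 θ + a3 * F4 θ - c) =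
      (fun θ => a1 * F1 θ + (F2 θ + (-a2 * F3 θ + (a3 * F4 θ + -c)))) := by funext θ; ring
  rw [key, integral_add h1' h234, integral_add h2 h34, integral_add h3' h4c,
      integral_add h4' hc, integral_const_mul _ _, integral_const_mul _ _, integral_const_mul _ _,
      integral_const]
  simp [measure_univ]
  ring

lemma integral_comb6 [IsProbabilityMeasure μ] (a2 a4 c : ℂ)
    (h1 : Integrable F1 μ) (h2 : Integrable F2 μ) (h4 : Integrable F4 μ) :
    ∫ θ, (F1 θ - a2 * F2 θ + c - a4 * F4 θ) ∂μ =
      (∫ θ, F1 θ ∂μ) - a2 * (∫ θ, F2 θ ∂μ) + c - a4 * (∫ θ, F4 θ ∂μ) := by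
  have h2' : Integrable (fun θ => -a2 * F2 θ) μ := h2.const_mul _
  have h4' : Integrable (fun θ => -a4 * F4 θ) μ := h4.const_mul _
  have hc : Integrable (fun _ : ℝ => c) μ := integrable_const _
  have hc4 : Integrable (fun θ => c + -a4 * F4 θ) μ := hc.add h4'
  have h2c4 : Integrable (fun θ => -a2 * F2 θ + (c + -a4 * F4 θ)) μ := h2'.add hc4
  have key : (fun θ => F1 θ - a2 * F2 θ + c - a4 * F4 θ) =
      (fun θ => F1 θ + (-a2 * F2 θ + (c + -a4 * F4 θ))) := by funext θ; ring
  rw [key, integral_add h1 h2c4, integral_add h2' hc4, integral_add hc h4',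
      integral_const_mul _ _, integral_const_mul _ _, integral_const]
  simp [measure_univ]
  ring

end Comb

section Main

variable {f : ℂ → ℂ} (hf : DifferentiableOn ℂ f (ball 0 1))
    (hmaps : MapsTo f (ball 0 1) (ball 0 1)) (hf0 : f 0 = 0)
    {B : ℕ → ℝ → ℂ}
    (hBlim : ∀ n, 1 ≤ n → ∀ᵐ (θ : ℝ) ∂circleMeasure,
      Tendsto (fun r : ℝ => f^[n] ((r : ℂ) * Complex.exp ((θ : ℂ) * Complex.I)))
        (nhdsWithin 1 (Set.Iio 1)) (nhds (B n θ)))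
    (hBinner : ∀ n, 1 ≤ n → ∀ᵐ (θ : ℝ) ∂circleMeasure, ‖B n θ‖ = 1)
    {n : ℕ} (hn : 1 ≤ n)

include hf hf0 hBlim hBinner hn in
lemma ae_tendsto_w :
    ∀ᵐ (θ : ℝ) ∂circleMeasure,
      Tendsto (fun r : ℝ => f^[n] ((r:ℂ) * Complex.exp ((θ:ℂ)*Complex.I)))
        (nhdsWithin 1 (Set.Iio 1)) (nhds (B n θ)) ∧
      Tendsto (fun r : ℝ => dslope f 0 (f^[n] ((r:ℂ) * Complex.exp ((θ:ℂ)*Complex.I))))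
        (nhdsWithin 1 (Set.Iio 1)) (nhds (B (n+1) θ / B n θ)) ∧
      Tendsto (fun r : ℝ => dslope (dslope f 0) 0 (f^[n] ((r:ℂ)*Complex.exp ((θ:ℂ)*Complex.I))))
        (nhdsWithin 1 (Set.Iio 1)) (nhds ((B (n+1) θ / B n θ - deriv f 0) / B n θ)) ∧
      B n θ ≠ 0 := by
  filter_upwards [hBlim n hn, hBlim (n+1) (le_trans hn (Nat.le_succ n)), hBinner n hn]
    with θ hb hc hbn
  have hbne : B n θ ≠ 0 := by
    intro h; rw [h] at hbn; simp at hbn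
  set e : ℝ → ℂ := fun r => (r:ℂ) * Complex.exp ((θ:ℂ)*Complex.I) with he
  have hev : ∀ᶠ r in nhdsWithin (1:ℝ) (Set.Iio 1), f^[n] (e r) ≠ 0 := by
    have h1 : Tendsto (fun r => ‖f^[n] (e r)‖) (nhdsWithin 1 (Set.Iio 1)) (nhds ‖B n θ‖) :=
      hb.norm
    have h2 : ∀ᶠ x in nhds ‖B n θ‖, (1:ℝ)/2 < x := by
      apply eventually_gt_nhds; rw [hbn]; norm_num
    filter_upwards [h1.eventually h2] with r hr
    intro h0; rw [h0] at hr; simp at hr; linarith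
  have hw : Tendsto (fun r : ℝ => dslope f 0 (f^[n] (e r)))
      (nhdsWithin 1 (Set.Iio 1)) (nhds (B (n+1) θ / B n θ)) := by
    apply Tendsto.congr' (f₁ := fun r => f^[n+1] (e r) / f^[n] (e r))
    · filter_upwards [hev] with r hr
      have h1 : f (f^[n] (e r)) = f^[n] (e r) * dslope f 0 (f^[n] (e r)) := u_eq hf0 _
      have h2 : f^[n+1] (e r) = f (f^[n] (e r)) := Function.iterate_succ_apply' f n (e r)
      rw [h2, h1, mul_div_cancel_left₀ _ hr]
    · exact hc.div hb hbne
  refine ⟨hb, hw, ?_, hbne⟩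
  apply Tendsto.congr' (f₁ := fun r => (dslope f 0 (f^[n] (e r)) - deriv f 0) / f^[n] (e r))
  · filter_upwards [hev] with r hr
    rw [g2_eq _ hr, u_zero]
  · exact (hw.sub tendsto_const_nhds).div hb hbne

include hf hmaps hf0 hBlim hBinner hn in
lemma Vst (s t : ℕ) :
    Integrable (fun θ => (B n θ)^s * (B (n+1) θ / B n θ)^t) circleMeasure ∧
    ∫ θ, (B n θ)^s * (B (n+1) θ / B n θ)^t ∂circleMeasure =
      (0:ℂ)^s * (deriv f 0)^t := by
  obtain ⟨hnd, hnm, hn0⟩ := iter_facts hf hmaps hf0 n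
  have hcomp : DifferentiableOn ℂ (fun z => dslope f 0 (f^[n] z)) (ball 0 1) :=
    (u_diff hf).comp hnd hnm
  have key := boundary_integral_eq (fun z => (f^[n] z)^s * (dslope f 0 (f^[n] z))^t)
    ((hnd.pow s).mul (hcomp.pow t)) 1
    (fun z hz => by
      rw [norm_mul, norm_pow, norm_pow]
      have h1 : ‖f^[n] z‖ ≤ 1 := le_of_lt (by simpa [mem_ball_zero_iff] using hnm hz)
      have h2 : ‖dslope f 0 (f^[n] z)‖ ≤ 1 := u_bound hf hmaps hf0 _ (hnm hz)
      calc ‖f^[n] z‖^s * ‖dslope f 0 (f^[n] z)‖^t ≤ 1^s * 1^t := by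
            apply mul_le_mul (pow_le_pow_left₀ (norm_nonneg _) h1 s)
              (pow_le_pow_left₀ (norm_nonneg _) h2 t) (by positivity) (by positivity)
        _ = 1 := by norm_num)
    (fun θ => (B n θ)^s * (B (n+1) θ / B n θ)^t)
    (by
      filter_upwards [ae_tendsto_w hf hf0 hBlim hBinner hn] with θ hθ
      exact (hθ.1.pow s).mul (hθ.2.1.pow t))
  simp only [hn0, u_zero] at key
  exact key

include hf hmaps hf0 hBlim hBinner hn in
lemma G2int :
    Integrable (fun θ => (B (n+1) θ / B n θ - deriv f 0) / B n θ) circleMeasure ∧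
    ∫ θ, (B (n+1) θ / B n θ - deriv f 0) / B n θ ∂circleMeasure = deriv (deriv f) 0 / 2 := by
  obtain ⟨hnd, hnm, hn0⟩ := iter_facts hf hmaps hf0 n
  have key := boundary_integral_eq (fun z => dslope (dslope f 0) 0 (f^[n] z))
    ((g2_diff hf).comp hnd hnm) 3
    (fun z hz => g2_bound hf hmaps hf0 _ (hnm hz))
    (fun θ => (B (n+1) θ / B n θ - deriv f 0) / B n θ)
    (by
      filter_upwards [ae_tendsto_w hf hf0 hBlim hBinner hn] with θ hθ
      exact hθ.2.2.1)
  simp only [hn0, dslope_same] at key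
  rw [deriv_u_zero hf hf0] at key
  exact key


include hBinner hn in
lemma ae_rel : ∀ᵐ (θ : ℝ) ∂circleMeasure,
    B n θ ≠ 0 ∧ (B (n+1) θ / B n θ) ≠ 0 ∧
    (starRingEnd ℂ) (B n θ) = (B n θ)⁻¹ ∧
    (starRingEnd ℂ) (B (n+1) θ / B n θ) = (B (n+1) θ / B n θ)⁻¹ ∧
    B (n+1) θ = B n θ * (B (n+1) θ / B n θ) ∧
    B (n+1) θ * (starRingEnd ℂ) (B (n+1) θ) = 1 := by
  filter_upwards [hBinner n hn, hBinner (n+1) (le_trans hn (Nat.le_succ n))] with θ h1 h2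
  have hbne : B n θ ≠ 0 := fun h0 => by rw [h0] at h1; simp at h1
  have hw : ‖B (n+1) θ / B n θ‖ = 1 := by rw [norm_div, h1, h2]; norm_num
  have hwne : B (n+1) θ / B n θ ≠ 0 := fun h0 => by rw [h0] at hw; simp at hw
  exact ⟨hbne, hwne, conj_eq_inv h1, conj_eq_inv hw, by field_simp, mul_conj_one h2⟩


include hf hmaps hf0 hBlim hBinner hn in
lemma moments (lam mu : ℂ) (hlam : lam = (starRingEnd ℂ) (deriv f 0))
    (hmu : mu = (starRingEnd ℂ) (deriv (deriv f) 0) / 2) (j k : ℕ) :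
    Integrable (fun θ => (B (n+1) θ)^j * ((starRingEnd ℂ) (B (n+1) θ))^k *
      ((B n θ - lam * B (n+1) θ)^2 - mu * B (n+1) θ)) circleMeasure ∧
    ∫ θ, (B (n+1) θ)^j * ((starRingEnd ℂ) (B (n+1) θ))^k *
      ((B n θ - lam * B (n+1) θ)^2 - mu * B (n+1) θ) ∂circleMeasure = 0 := by
  have hV := fun s t => Vst hf hmaps hf0 hBlim hBinner hn s t
  have hG := G2int hf hmaps hf0 hBlim hBinner hn
  have hrel := ae_rel hBinner hn
  have hc1 : (starRingEnd ℂ) (deriv f 0) = lam := hlam.symm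
  obtain ⟨p, hpk⟩ : ∃ p, k = j + 1 + p ∨ j = k + p := by
    rcases le_or_gt k j with h | h
    · exact ⟨j - k, Or.inr (by omega)⟩
    · exact ⟨k - j - 1, Or.inl (by omega)⟩
  rcases hpk with hpk | hpk
  · -- k = j + 1 + p : conjugate-heavy cases
    subst hpk
    match p with
    | 0 =>
      have hae : (fun θ => (B (n+1) θ)^j * ((starRingEnd ℂ) (B (n+1) θ))^(j+1+0) *
          ((B n θ - lam * B (n+1) θ)^2 - mu * B (n+1) θ)) =ᵐ[circleMeasure]
          (fun θ => (starRingEnd ℂ) (deriv f 0) * ((B n θ)^1 * (B (n+1) θ / B n θ)^0)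
            + (starRingEnd ℂ) ((B (n+1) θ / B n θ - deriv f 0) / B n θ)
            - (2*lam)*((B n θ)^1*(B (n+1) θ / B n θ)^0)
            + lam^2*((B n θ)^1*(B (n+1) θ / B n θ)^1) - mu) := by
        filter_upwards [hrel] with θ hθ
        set W := B (n+1) θ / B n θ with hW
        obtain ⟨hbne, hwne, hcb, hcw, hc, hcc⟩ := hθ
        have h0 : j + 1 + 0 = j + 1 := rfl
        rw [h0, pow_cancel_left hcc j 1, pow_one, hc]
        exact pt2 lam mu (deriv f 0) hbne hwne hcb hcw
      have hint : Integrable (fun θ =>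
          (starRingEnd ℂ) (deriv f 0) * ((B n θ)^1 * (B (n+1) θ / B n θ)^0)
            + (starRingEnd ℂ) ((B (n+1) θ / B n θ - deriv f 0) / B n θ)
            - (2*lam)*((B n θ)^1*(B (n+1) θ / B n θ)^0)
            + lam^2*((B n θ)^1*(B (n+1) θ / B n θ)^1) - mu) circleMeasure :=
        (((((hV 1 0).1.const_mul _).add hG.1.conj').sub
          ((hV 1 0).1.const_mul (2*lam))).add ((hV 1 1).1.const_mul (lam^2))).sub
          (integrable_const mu)
      refine ⟨hint.congr hae.symm, ?_⟩
      rw [integral_congr_ae hae,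
        integral_comb5 ((starRingEnd ℂ) (deriv f 0)) (2*lam) (lam^2) mu
          (hV 1 0).1 hG.1.conj' (hV 1 0).1 (hV 1 1).1]
      have hGc : ∫ θ, (starRingEnd ℂ) ((B (n+1) θ / B n θ - deriv f 0) / B n θ)
          ∂circleMeasure = mu := by
        rw [integral_conj, hG.2, map_div₀, hmu]
        norm_num [map_ofNat]
      simp only [(hV 1 0).2, (hV 1 1).2, hGc]
      simp
    | 1 =>
      have hae : (fun θ => (B (n+1) θ)^j * ((starRingEnd ℂ) (B (n+1) θ))^(j+1+1) *
          ((B n θ - lam * B (n+1) θ)^2 - mu * B (n+1) θ)) =ᵐ[circleMeasure]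
          (fun θ => (starRingEnd ℂ) ((B n θ)^0*(B (n+1) θ / B n θ)^2)
            - (2*lam)*(starRingEnd ℂ) ((B n θ)^0*(B (n+1) θ / B n θ)^1) + lam^2
            - mu*(starRingEnd ℂ) ((B n θ)^1*(B (n+1) θ / B n θ)^1)) := by
        filter_upwards [hrel] with θ hθ
        set W := B (n+1) θ / B n θ with hW
        obtain ⟨hbne, hwne, hcb, hcw, hc, hcc⟩ := hθ
        have h0 : j + 1 + 1 = j + 2 := rfl
        rw [h0, pow_cancel_left hcc j 2, hc]
        exact pt3 lam mu hbne hwne hcb hcw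
      have hint : Integrable (fun θ =>
          (starRingEnd ℂ) ((B n θ)^0*(B (n+1) θ / B n θ)^2)
            - (2*lam)*(starRingEnd ℂ) ((B n θ)^0*(B (n+1) θ / B n θ)^1) + lam^2
            - mu*(starRingEnd ℂ) ((B n θ)^1*(B (n+1) θ / B n θ)^1)) circleMeasure :=
        (((hV 0 2).1.conj'.sub ((hV 0 1).1.conj'.const_mul (2*lam))).add
          (integrable_const (lam^2))).sub ((hV 1 1).1.conj'.const_mul mu)
      refine ⟨hint.congr hae.symm, ?_⟩
      rw [integral_congr_ae hae,
        integral_comb6 (2*lam) mu (lam^2) (hV 0 2).1.conj' (hV 0 1).1.conj'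
          (hV 1 1).1.conj']
      have v1 : ∫ θ, (starRingEnd ℂ) ((B n θ)^0*(B (n+1) θ / B n θ)^2) ∂circleMeasure
          = lam^2 := by
        rw [integral_conj, (hV 0 2).2]
        simp [map_pow, hc1]
        try ring
      have v2 : ∫ θ, (starRingEnd ℂ) ((B n θ)^0*(B (n+1) θ / B n θ)^1) ∂circleMeasure
          = lam := by
        rw [integral_conj, (hV 0 1).2]
        simp [hc1]
      have v3 : ∫ θ, (starRingEnd ℂ) ((B n θ)^1*(B (n+1) θ / B n θ)^1) ∂circleMeasure
          = 0 := by
        rw [integral_conj, (hV 1 1).2]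
        simp
      rw [v1, v2, v3]
      ring
    | (e+2) =>
      have hae : (fun θ => (B (n+1) θ)^j * ((starRingEnd ℂ) (B (n+1) θ))^(j+1+(e+2)) *
          ((B n θ - lam * B (n+1) θ)^2 - mu * B (n+1) θ)) =ᵐ[circleMeasure]
          (fun θ => (starRingEnd ℂ) ((B n θ)^(e+1)*(B (n+1) θ / B n θ)^(e+3))
            - (2*lam)*(starRingEnd ℂ) ((B n θ)^(e+1)*(B (n+1) θ / B n θ)^(e+2))
            + lam^2*(starRingEnd ℂ) ((B n θ)^(e+1)*(B (n+1) θ / B n θ)^(e+1))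
            - mu*(starRingEnd ℂ) ((B n θ)^(e+2)*(B (n+1) θ / B n θ)^(e+2))) := by
        filter_upwards [hrel] with θ hθ
        set W := B (n+1) θ / B n θ with hW
        obtain ⟨hbne, hwne, hcb, hcw, hc, hcc⟩ := hθ
        have h0 : j + 1 + (e + 2) = j + (e + 3) := by omega
        rw [h0, pow_cancel_left hcc j (e+3), hc]
        exact pt4 lam mu hbne hwne hcb hcw e
      have hint : Integrable (fun θ =>
          (starRingEnd ℂ) ((B n θ)^(e+1)*(B (n+1) θ / B n θ)^(e+3))
            - (2*lam)*(starRingEnd ℂ) ((B n θ)^(e+1)*(B (n+1) θ / B n θ)^(e+2))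
            + lam^2*(starRingEnd ℂ) ((B n θ)^(e+1)*(B (n+1) θ / B n θ)^(e+1))
            - mu*(starRingEnd ℂ) ((B n θ)^(e+2)*(B (n+1) θ / B n θ)^(e+2))) circleMeasure :=
        (((hV (e+1) (e+3)).1.conj'.sub ((hV (e+1) (e+2)).1.conj'.const_mul (2*lam))).add
          ((hV (e+1) (e+1)).1.conj'.const_mul (lam^2))).sub
          ((hV (e+2) (e+2)).1.conj'.const_mul mu)
      refine ⟨hint.congr hae.symm, ?_⟩
      rw [integral_congr_ae hae,
        integral_comb4 (2*lam) (lam^2) mu (hV (e+1) (e+3)).1.conj'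
          (hV (e+1) (e+2)).1.conj' (hV (e+1) (e+1)).1.conj' (hV (e+2) (e+2)).1.conj']
      have v : ∀ s t : ℕ, s ≠ 0 → ∫ θ, (starRingEnd ℂ)
          ((B n θ)^s*(B (n+1) θ / B n θ)^t) ∂circleMeasure = 0 := by
        intro s t hs
        rw [integral_conj, (hV s t).2, zero_pow hs, zero_mul, map_zero]
      rw [v (e+1) (e+3) (by omega), v (e+1) (e+2) (by omega), v (e+1) (e+1) (by omega),
        v (e+2) (e+2) (by omega)]
      ring
  · -- j = k + p
    subst hpk
    have hae : (fun θ => (B (n+1) θ)^(k+p) * ((starRingEnd ℂ) (B (n+1) θ))^k *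
        ((B n θ - lam * B (n+1) θ)^2 - mu * B (n+1) θ)) =ᵐ[circleMeasure]
        (fun θ => ((B n θ)^(p+2) * (B (n+1) θ / B n θ)^p)
          - (2*lam)*((B n θ)^(p+2)*(B (n+1) θ / B n θ)^(p+1))
          + lam^2*((B n θ)^(p+2)*(B (n+1) θ / B n θ)^(p+2))
          - mu*((B n θ)^(p+1)*(B (n+1) θ / B n θ)^(p+1))) := by
      filter_upwards [hrel] with θ hθ
      set W := B (n+1) θ / B n θ with hW
      obtain ⟨hbne, hwne, hcb, hcw, hc, hcc⟩ := hθ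
      rw [pow_cancel_right hcc k p, hc]
      have := pt1 (B n θ) W lam mu p
      rw [this]
    have hint : Integrable (fun θ =>
        ((B n θ)^(p+2) * (B (n+1) θ / B n θ)^p)
          - (2*lam)*((B n θ)^(p+2)*(B (n+1) θ / B n θ)^(p+1))
          + lam^2*((B n θ)^(p+2)*(B (n+1) θ / B n θ)^(p+2))
          - mu*((B n θ)^(p+1)*(B (n+1) θ / B n θ)^(p+1))) circleMeasure :=
      (((hV (p+2) p).1.sub ((hV (p+2) (p+1)).1.const_mul (2*lam))).add
        ((hV (p+2) (p+2)).1.const_mul (lam^2))).sub ((hV (p+1) (p+1)).1.const_mul mu)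
    refine ⟨hint.congr hae.symm, ?_⟩
    rw [integral_congr_ae hae,
      integral_comb4 (2*lam) (lam^2) mu (hV (p+2) p).1 (hV (p+2) (p+1)).1
        (hV (p+2) (p+2)).1 (hV (p+1) (p+1)).1]
    simp only [(hV (p+2) p).2, (hV (p+2) (p+1)).2, (hV (p+2) (p+2)).2, (hV (p+1) (p+1)).2]
    simp [zero_pow]

end Main

theorem stmt_13 (f : ℂ → ℂ)
    (hf : DifferentiableOn ℂ f (Metric.ball 0 1))
    (hmaps : Set.MapsTo f (Metric.ball 0 1) (Metric.ball 0 1))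
    (hf0 : f 0 = 0)
    (B : ℕ → ℝ → ℂ)
    (hBmeas : ∀ n, Measurable (B n))
    (hBlim : ∀ n, 1 ≤ n → ∀ᵐ (θ : ℝ) ∂circleMeasure,
      Tendsto (fun r : ℝ => f^[n] ((r : ℂ) * Complex.exp ((θ : ℂ) * Complex.I)))
        (nhdsWithin 1 (Set.Iio 1)) (nhds (B n θ)))
    (hBinner : ∀ n, 1 ≤ n → ∀ᵐ (θ : ℝ) ∂circleMeasure, ‖B n θ‖ = 1)
    (lam mu : ℂ) (hlam : lam = starRingEnd ℂ (deriv f 0))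
    (hmu : mu = starRingEnd ℂ (deriv (deriv f) 0) / 2)
    (n : ℕ) (hn : 1 ≤ n) :
    circleMeasure[(fun θ => (B n θ - lam * B (n + 1) θ) ^ 2) |
        MeasurableSpace.comap (B (n + 1)) inferInstance]
      =ᵐ[circleMeasure] (fun θ => mu * B (n + 1) θ) := by
  classical
  have hMom := moments hf hmaps hf0 hBlim hBinner hn lam mu hlam hmu
  set c : ℝ → ℂ := B (n+1) with hcdef
  set D : ℝ → ℂ := fun θ => (B n θ - lam * B (n+1) θ)^2 - mu * B (n+1) θ with hDdef
  have hDint : Integrable D circleMeasure := by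
    have := (hMom 0 0).1
    simpa using this
  have hDzero : ∫ θ, D θ ∂circleMeasure = 0 := by
    have := (hMom 0 0).2
    simpa using this
  have hDmeas : Measurable D := by
    apply Measurable.sub
    · exact ((hBmeas n).sub ((hBmeas (n+1)).const_mul lam)).pow_const 2
    · exact (hBmeas (n+1)).const_mul mu
  have hcmeas : Measurable c := hBmeas (n+1)
  have hcae : ∀ᵐ θ ∂circleMeasure, c θ ∈ Metric.sphere (0:ℂ) 1 := by
    filter_upwards [hBinner (n+1) (le_trans hn (Nat.le_succ n))] with θ hθ
    simpa [mem_sphere_zero_iff_norm] using hθ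
  -- sphere and extension operator
  set S : Set ℂ := Metric.sphere (0:ℂ) 1 with hSdef
  let ξ : C(S, ℂ) := ⟨fun z => (z : ℂ), continuous_subtype_val⟩
  let E : C(S, ℂ) → ℂ → ℂ := fun ψ z => if h : z ∈ S then ψ ⟨z, h⟩ else 0
  have hEmeas : ∀ ψ : C(S,ℂ), Measurable (E ψ) := fun ψ =>
    Measurable.dite (ψ.continuous.measurable) measurable_const
      (Metric.isClosed_sphere.measurableSet)
  have hEbdd : ∀ ψ : C(S,ℂ), ∀ z, ‖E ψ z‖ ≤ ‖ψ‖ := by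
    intro ψ z
    by_cases h : z ∈ S
    · simp only [E, dif_pos h]; exact ψ.norm_coe_le_norm _
    · simp only [E, dif_neg h, norm_zero]; exact norm_nonneg _
  have hTint : ∀ ψ : C(S,ℂ), Integrable (fun θ => E ψ (c θ) * D θ) circleMeasure := by
    intro ψ
    exact hDint.bdd_mul ((hEmeas ψ).comp hcmeas).aestronglyMeasurable
      (Eventually.of_forall fun θ => hEbdd ψ (c θ))
  have hEmono : ∀ j k : ℕ, ∀ᵐ θ ∂circleMeasure,
      E (ξ^j * (star ξ)^k) (c θ) = (c θ)^j * ((starRingEnd ℂ) (c θ))^k := by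
    intro j k
    filter_upwards [hcae] with θ h
    simp only [E, dif_pos h]
    simp [ξ, Complex.star_def]
  -- T vanishes on the span of monomials
  set gen : Set C(S,ℂ) := {g | ∃ j k : ℕ, g = ξ^j * (star ξ)^k} with hgen
  set M : Submodule ℂ C(S,ℂ) := Submodule.span ℂ gen with hM
  have hTM : ∀ ψ ∈ M, ∫ θ, E ψ (c θ) * D θ ∂circleMeasure = 0 := by
    intro ψ hψ
    induction hψ using Submodule.span_induction with
    | mem g hg =>
      obtain ⟨j, k, rfl⟩ := hg
      rw [integral_congr_ae (g := fun θ => (c θ)^j * ((starRingEnd ℂ) (c θ))^k * D θ) ?_]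
      · exact (hMom j k).2
      · filter_upwards [hEmono j k] with θ hθ
        rw [hθ]
    | zero =>
      have : ∀ z, E (0 : C(S,ℂ)) z = 0 := by
        intro z; by_cases h : z ∈ S <;> simp [E, h]
      simp only [this, zero_mul, integral_zero]
    | add x y hx hy ihx ihy =>
      have hadd : ∀ z, E (x + y) z = E x z + E y z := by
        intro z; by_cases h : z ∈ S <;> simp [E, h]
      have : (fun θ => E (x + y) (c θ) * D θ)
          = fun θ => E x (c θ) * D θ + E y (c θ) * D θ := by
        funext θ; rw [hadd]; ring
      rw [this, integral_add (hTint x) (hTint y), ihx, ihy, add_zero]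
    | smul a x hx ihx =>
      have hsmul : ∀ z, E (a • x) z = a * E x z := by
        intro z; by_cases h : z ∈ S <;> simp [E, h]
      have : (fun θ => E (a • x) (c θ) * D θ)
          = fun θ => a * (E x (c θ) * D θ) := by
        funext θ; rw [hsmul]; ring
      rw [this, integral_const_mul _ _, ihx, mul_zero]
  -- Stone-Weierstrass
  haveI : CompactSpace S := Metric.sphere.compactSpace _ _
  set A : StarSubalgebra ℂ C(S,ℂ) := StarAlgebra.adjoin ℂ ({ξ} : Set C(S,ℂ)) with hA
  have hsep : A.SeparatesPoints := by
    intro x y hxy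
    refine ⟨ξ, ⟨ξ, StarAlgebra.subset_adjoin ℂ _ (Set.mem_singleton ξ), rfl⟩, ?_⟩
    simpa [ξ] using fun h => hxy (Subtype.ext h)
  have hdense := ContinuousMap.starSubalgebra_topologicalClosure_eq_top_of_separatesPoints A hsep
  have hAM : ∀ q ∈ A, q ∈ M := by
    intro q hq
    induction hq using StarAlgebra.adjoin_induction with
    | mem x hx =>
      rw [Set.mem_singleton_iff] at hx
      subst hx
      exact Submodule.subset_span ⟨1, 0, by simp⟩
    | algebraMap r =>
      rw [Algebra.algebraMap_eq_smul_one]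
      exact Submodule.smul_mem _ _ (Submodule.subset_span ⟨0, 0, by simp⟩)
    | add x y hx hy ihx ihy => exact Submodule.add_mem _ ihx ihy
    | mul x y hx hy ihx ihy =>
      have hmm : M * M ≤ M := by
        rw [hM, Submodule.span_mul_span]
        apply Submodule.span_le.mpr
        rintro g hg
        rw [Set.mem_mul] at hg
        obtain ⟨g1, hg1, g2, hg2, rfl⟩ := hg
        obtain ⟨j1, k1, rfl⟩ := hg1
        obtain ⟨j2, k2, rfl⟩ := hg2
        exact Submodule.subset_span ⟨j1+j2, k1+k2, by rw [pow_add, pow_add]; ring⟩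
      exact hmm (Submodule.mul_mem_mul ihx ihy)
    | star x hx ihx =>
      clear hx
      induction ihx using Submodule.span_induction with
      | mem g hg =>
        obtain ⟨j, k, rfl⟩ := hg
        refine Submodule.subset_span ⟨k, j, ?_⟩
        rw [star_mul, star_pow, star_pow, star_star]
      | zero => simpa using Submodule.zero_mem M
      | add x y hx hy ihx ihy => rw [star_add]; exact Submodule.add_mem _ ihx ihy
      | smul a x hx ihx =>
        rw [star_smul]
        exact Submodule.smul_mem _ _ ihx
  -- continuous test functions
  have hTcont : ∀ φ : ℂ → ℂ, Continuous φ →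
      ∫ θ, φ (c θ) * D θ ∂circleMeasure = 0 := by
    intro φ hφ
    set ψ : C(S, ℂ) := ⟨fun z => φ z, hφ.comp continuous_subtype_val⟩ with hψdef
    have hae : (fun θ => φ (c θ) * D θ) =ᵐ[circleMeasure]
        (fun θ => E ψ (c θ) * D θ) := by
      filter_upwards [hcae] with θ h
      simp only [E, dif_pos h, ψ]
      rfl
    rw [integral_congr_ae hae]
    by_contra hne
    have hpos : 0 < ‖∫ θ, E ψ (c θ) * D θ ∂circleMeasure‖ := by
      simpa [norm_pos_iff] using hne
    set C0 : ℝ := ∫ θ, ‖D θ‖ ∂circleMeasure with hC0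
    have hC0nn : 0 ≤ C0 := integral_nonneg fun θ => norm_nonneg _
    set ε : ℝ := ‖∫ θ, E ψ (c θ) * D θ ∂circleMeasure‖ / (C0 + 1) with hε
    have hεpos : 0 < ε := div_pos hpos (by linarith)
    have hψmem : ψ ∈ closure (A : Set C(S,ℂ)) := by
      have : ψ ∈ (⊤ : StarSubalgebra ℂ C(S,ℂ)) := trivial
      rw [← hdense] at this
      exact this
    obtain ⟨q, hqA, hqd⟩ := Metric.mem_closure_iff.mp hψmem ε hεpos
    have hq0 : ∫ θ, E q (c θ) * D θ ∂circleMeasure = 0 := hTM q (hAM q hqA)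
    have hsub : ∀ z, E ψ z - E q z = E (ψ - q) z := by
      intro z; by_cases h : z ∈ S <;> simp [E, h]
    have hsplit : ∫ θ, E ψ (c θ) * D θ ∂circleMeasure
        = ∫ θ, E (ψ - q) (c θ) * D θ ∂circleMeasure := by
      have : (fun θ => E (ψ - q) (c θ) * D θ)
          = fun θ => E ψ (c θ) * D θ - E q (c θ) * D θ := by
        funext θ; rw [← hsub]; ring
      rw [this, integral_sub (hTint ψ) (hTint q), hq0, sub_zero]
    have hbound : ‖∫ θ, E (ψ - q) (c θ) * D θ ∂circleMeasure‖ ≤ ε * C0 := by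
      calc ‖∫ θ, E (ψ - q) (c θ) * D θ ∂circleMeasure‖
          ≤ ∫ θ, ‖E (ψ - q) (c θ) * D θ‖ ∂circleMeasure := norm_integral_le_integral_norm _
        _ ≤ ∫ θ, ε * ‖D θ‖ ∂circleMeasure := by
            apply integral_mono (hTint (ψ - q)).norm (hDint.norm.const_mul ε)
            intro θ
            show ‖E (ψ - q) (c θ) * D θ‖ ≤ ε * ‖D θ‖
            rw [norm_mul]
            apply mul_le_mul_of_nonneg_right _ (norm_nonneg _)
            calc ‖E (ψ - q) (c θ)‖ ≤ ‖ψ - q‖ := hEbdd _ _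
              _ ≤ ε := by rw [← dist_eq_norm]; exact hqd.le
        _ = ε * C0 := by rw [integral_const_mul _ _]
    have hfinal : ‖∫ θ, E ψ (c θ) * D θ ∂circleMeasure‖
        < ‖∫ θ, E ψ (c θ) * D θ ∂circleMeasure‖ := by
      calc ‖∫ θ, E ψ (c θ) * D θ ∂circleMeasure‖
          = ‖∫ θ, E (ψ - q) (c θ) * D θ ∂circleMeasure‖ := by rw [hsplit]
        _ ≤ ε * C0 := hbound
        _ < ε * (C0 + 1) := by
            apply mul_lt_mul_of_pos_left _ hεpos
            linarith
        _ = ‖∫ θ, E ψ (c θ) * D θ ∂circleMeasure‖ := by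
            rw [hε, div_mul_cancel₀ _ (by linarith : (C0 + 1 : ℝ) ≠ 0)]
    exact absurd hfinal (lt_irrefl _)
  -- closed sets
  have hTclosed : ∀ A0 : Set ℂ, IsClosed A0 →
      ∫ θ in c ⁻¹' A0, D θ ∂circleMeasure = 0 := by
    intro A0 hA0
    rcases A0.eq_empty_or_nonempty with rfl | hne
    · simp
    set φk : ℕ → ℂ → ℝ := fun k z => max 0 (1 - k * Metric.infDist z A0) with hφk
    have hφcont : ∀ k, Continuous (φk k) :=
      fun k => continuous_const.max (continuous_const.sub
        (continuous_const.mul (Metric.continuous_infDist_pt A0)))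
    have hφbd : ∀ k z, ‖φk k z‖ ≤ 1 := by
      intro k z
      rw [Real.norm_eq_abs, _root_.abs_of_nonneg (le_max_left _ _)]
      apply max_le (by norm_num)
      have : 0 ≤ (k:ℝ) * Metric.infDist z A0 :=
        mul_nonneg (Nat.cast_nonneg k) Metric.infDist_nonneg
      linarith
    have hφlim : ∀ z, Tendsto (fun k => ((φk k z : ℝ) : ℂ)) atTop
        (nhds (Set.indicator A0 (fun _ => (1:ℂ)) z)) := by
      intro z
      by_cases hz : z ∈ A0
      · have he : ∀ k, ((φk k z : ℝ) : ℂ) = 1 := by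
          intro k
          simp [hφk, Metric.infDist_zero_of_mem hz]
        simp only [he, Set.indicator_of_mem hz]
        exact tendsto_const_nhds
      · have hd : 0 < Metric.infDist z A0 :=
          (hA0.notMem_iff_infDist_pos hne).mp hz
        rw [Set.indicator_of_notMem hz]
        apply Tendsto.congr' (f₁ := fun _ => (0:ℂ)) _ tendsto_const_nhds
        filter_upwards [eventually_ge_atTop ⌈(Metric.infDist z A0)⁻¹⌉₊] with k hk
        have h2 : (Metric.infDist z A0)⁻¹ ≤ (k:ℝ) :=
          le_trans (Nat.le_ceil _) (by exact_mod_cast hk)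
        have h3 := mul_le_mul_of_nonneg_left h2 hd.le
        rw [mul_inv_cancel₀ hd.ne'] at h3
        have h4 : φk k z = 0 := max_eq_left (by nlinarith)
        simp [h4]
    have hvals : ∀ k : ℕ, ∫ θ, ((φk k (c θ) : ℝ) : ℂ) * D θ ∂circleMeasure = 0 :=
      fun k => hTcont _ (Complex.continuous_ofReal.comp (hφcont k))
    have hDCT := tendsto_integral_of_dominated_convergence
      (F := fun k θ => ((φk k (c θ) : ℝ) : ℂ) * D θ)
      (f := fun θ => Set.indicator A0 (fun _ => (1:ℂ)) (c θ) * D θ)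
      (bound := fun θ => ‖D θ‖)
      (fun k => (((Complex.continuous_ofReal.comp (hφcont k)).measurable.comp
        hcmeas).mul hDmeas).aestronglyMeasurable)
      hDint.norm
      (fun k => Eventually.of_forall fun θ => by
        rw [norm_mul]
        have h5 : ‖((φk k (c θ) : ℝ) : ℂ)‖ ≤ 1 := by
          rw [Complex.norm_real]
          exact hφbd k (c θ)
        nlinarith [norm_nonneg (D θ), norm_nonneg (((φk k (c θ) : ℝ) : ℂ))])
      (Eventually.of_forall fun θ => (hφlim (c θ)).mul tendsto_const_nhds)
    simp only [hvals] at hDCT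
    have hzero : ∫ θ, Set.indicator A0 (fun _ => (1:ℂ)) (c θ) * D θ ∂circleMeasure = 0 :=
      (tendsto_nhds_unique tendsto_const_nhds hDCT).symm
    have hind : (fun θ => Set.indicator A0 (fun _ => (1:ℂ)) (c θ) * D θ)
        = fun θ => Set.indicator (c ⁻¹' A0) D θ := by
      funext θ
      by_cases h : c θ ∈ A0
      · simp [Set.indicator_of_mem h, Set.indicator_of_mem (Set.mem_preimage.mpr h)]
      · simp [Set.indicator_of_notMem h,
          Set.indicator_of_notMem (fun hh => h (Set.mem_preimage.mp hh))]
    rw [hind] at hzero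
    rw [← integral_indicator (hcmeas hA0.measurableSet)]
    exact hzero
  -- all Borel sets
  have hTset : ∀ A0 : Set ℂ, MeasurableSet A0 →
      ∫ θ in c ⁻¹' A0, D θ ∂circleMeasure = 0 := by
    have h_eq : (inferInstance : MeasurableSpace ℂ)
        = MeasurableSpace.generateFrom {s : Set ℂ | IsClosed s} := by
      rw [BorelSpace.measurable_eq (α := ℂ)]
      exact borel_eq_generateFrom_isClosed
    have hpi : IsPiSystem {s : Set ℂ | IsClosed s} := fun s hs t ht _ => hs.inter ht
    intro A0 hA0
    refine MeasurableSpace.induction_on_inter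
      (C := fun t _ => ∫ θ in c ⁻¹' t, D θ ∂circleMeasure = 0) h_eq hpi (by simp)
      (fun t ht => hTclosed t ht) ?_ ?_ A0 hA0
    · intro t ht hct
      have h2 := integral_add_compl (hcmeas ht) hDint
      rw [hct, zero_add] at h2
      rw [Set.preimage_compl]
      exact h2.trans hDzero
    · intro g hd hmg hC
      rw [Set.preimage_iUnion, integral_iUnion (fun i => hcmeas (hmg i))
        (fun i j hij => Disjoint.preimage c (hd hij)) hDint.integrableOn]
      simp only [hC, tsum_zero]
  -- conditional expectation
  have hm : MeasurableSpace.comap (B (n+1)) inferInstance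
      ≤ (inferInstance : MeasurableSpace ℝ) := (hBmeas (n+1)).comap_le
  haveI : IsFiniteMeasure (circleMeasure.trim hm) := isFiniteMeasure_trim hm
  have hcint : Integrable c circleMeasure := by
    refine Integrable.mono' (integrable_const 1) hcmeas.aestronglyMeasurable ?_
    filter_upwards [hBinner (n+1) (le_trans hn (Nat.le_succ n))] with θ h
    simp [hcdef, h]
  have hgint : Integrable (fun θ => mu * c θ) circleMeasure := hcint.const_mul mu
  have hfe : (fun θ => (B n θ - lam * B (n+1) θ)^2) = fun θ => D θ + mu * c θ := by
    funext θ
    simp only [hDdef]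
    ring
  have hY2 : Integrable (fun θ => (B n θ - lam * B (n+1) θ)^2) circleMeasure := by
    rw [hfe]
    exact hDint.add hgint
  refine (ae_eq_condExp_of_forall_setIntegral_eq hm hY2
    (fun s _ _ => hgint.integrableOn) ?_ ?_).symm
  · intro s hs _
    obtain ⟨A0, hA0, rfl⟩ := MeasurableSpace.measurableSet_comap.mp hs
    have h1 : ∫ θ in c ⁻¹' A0, (B n θ - lam * B (n+1) θ)^2 ∂circleMeasure
        = ∫ θ in c ⁻¹' A0, (D θ + mu * c θ) ∂circleMeasure := by
      rw [hfe]
    rw [h1, integral_add hDint.integrableOn hgint.integrableOn, hTset A0 hA0, zero_add]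
  · refine StronglyMeasurable.aestronglyMeasurable ?_
    have hmc : Measurable[MeasurableSpace.comap (B (n+1)) inferInstance] c :=
      measurable_iff_comap_le.mpr le_rfl
    exact (hmc.const_mul mu).stronglyMeasurable
end
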